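/- arXiv:1303.4917 — 6 statements merged into one kernel-verified Lean document; each statement's English description precedes it below -/
import Mathlib

section
/- Let τ ∈ [0,1], c ∈ ℝ, let (d_n) be a sequence of positive reals and (h_n) a sequence of reals such that n·h_n/d_n → c as n → ∞. For each n define μ_i^{(n)} = 0 for 1 ≤ i ≤ ⌊nτ⌋ and μ_i^{(n)} = h_n for ⌊nτ⌋ < i ≤ n. Then sup_{λ∈[0,1]} | (1/(n·d_n)) · Σ_{i=1}^{⌊nλ⌋} Σ_{j=⌊nλ⌋+1}^{n} (μ_j^{(n)} − μ_i^{(n)}) − c·φ_τ(λ) | → 0 as n → ∞. -/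
open Filter MeasureTheory Finset

lemma aux_sum (n m k : ℕ) (hm : m ≤ n) (hk : k ≤ n) (h : ℝ) :
    ∑ i ∈ Finset.Icc 1 m, ∑ j ∈ Finset.Icc (m+1) n,
      ((if j ≤ k then (0:ℝ) else h) - (if i ≤ k then (0:ℝ) else h))
    = ((min m k : ℕ) : ℝ) * ((n:ℝ) - ((max m k : ℕ) : ℝ)) * h := by
  have hfilt : ∀ a b : ℕ, Finset.filter (fun j => ¬ j ≤ k) (Finset.Icc a b)
      = Finset.Icc (max (a-1) k + 1) b := by
    intro a b; ext j; simp [Finset.mem_Icc, Finset.mem_filter]; omega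
  have hsum : ∀ a b : ℕ, ∑ j ∈ Finset.Icc a b, (if j ≤ k then (0:ℝ) else h)
      = ((b - max (a-1) k : ℕ) : ℝ) * h := by
    intro a b
    rw [Finset.sum_ite, Finset.sum_const_zero, zero_add, Finset.sum_const, hfilt,
      Nat.card_Icc, nsmul_eq_mul]
    congr 2
    omega
  have hinner : ∀ i : ℕ, ∑ j ∈ Finset.Icc (m+1) n,
      ((if j ≤ k then (0:ℝ) else h) - (if i ≤ k then (0:ℝ) else h))
      = ((n - max m k : ℕ) : ℝ) * h - ((n - m : ℕ):ℝ) * (if i ≤ k then (0:ℝ) else h) := by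
    intro i
    rw [Finset.sum_sub_distrib, hsum, Finset.sum_const, Nat.card_Icc, nsmul_eq_mul]
    congr 3 <;> omega
  rw [Finset.sum_congr rfl (fun i _ => hinner i), Finset.sum_sub_distrib,
    Finset.sum_const, Nat.card_Icc, ← Finset.mul_sum, hsum]
  rcases le_total m k with hmk | hmk
  · rw [min_eq_left (by exact_mod_cast hmk), max_eq_right hmk]
    have : max (1-1) k = k := by omega
    rw [this]
    have e1 : ((m - k : ℕ):ℝ) = 0 := by
      have : m - k = 0 := by omega
      simp [this]
    rw [e1]
    push_cast [hmk, hk]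
    ring
  · rw [min_eq_right (by exact_mod_cast hmk), max_eq_left hmk]
    have : max (1-1) k = k := by omega
    rw [this]
    push_cast [hmk, hk, hm, Nat.le_trans hmk hm]
    ring

lemma prod_bd (a c p q p' q' : ℝ) (hp : |p| ≤ 1) (hq : |q| ≤ 1) (hp' : |p'| ≤ 1) :
    |a * (p*q) - c * (p'*q')| ≤ |a - c| + |c| * (|p - p'| + |q - q'|) := by
  have key : a*(p*q) - c*(p'*q') = (a-c)*(p*q) + (c*((p-p')*q) + c*(p'*(q-q'))) := by ring
  have b1 : |(a-c)*(p*q)| ≤ |a-c| := by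
    rw [abs_mul, abs_mul]
    calc |a-c| * (|p| * |q|) ≤ |a-c| * 1 := by
          gcongr
          nlinarith [mul_le_mul hp hq (abs_nonneg q) zero_le_one]
      _ = |a-c| := mul_one _
  have b2 : |c*((p-p')*q)| ≤ |c| * |p-p'| := by
    rw [abs_mul, abs_mul]
    calc |c| * (|p-p'| * |q|) ≤ |c| * (|p-p'| * 1) := by gcongr
      _ = |c| * |p-p'| := by ring
  have b3 : |c*(p'*(q-q'))| ≤ |c| * |q-q'| := by
    rw [abs_mul, abs_mul]
    calc |c| * (|p'| * |q-q'|) ≤ |c| * (1 * |q-q'|) := by gcongr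
      _ = |c| * |q-q'| := by ring
  calc |a * (p*q) - c * (p'*q')| ≤ |(a-c)*(p*q)| + (|c*((p-p')*q)| + |c*(p'*(q-q'))|) := by
        rw [key]; exact (abs_add_le _ _).trans (by gcongr; exact abs_add_le _ _)
    _ ≤ |a - c| + |c| * (|p - p'| + |q - q'|) := by rw [mul_add]; linarith

lemma floor_close (n : ℕ) (hn : 1 ≤ n) (x : ℝ) (hx : 0 ≤ x) :
    |(⌊(n:ℝ)*x⌋₊:ℝ)/n - x| ≤ 1/n := by
  have hn' : (0:ℝ) < n := by exact_mod_cast hn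
  have h1 : (⌊(n:ℝ)*x⌋₊:ℝ) ≤ (n:ℝ)*x := Nat.floor_le (by positivity)
  have h2 : (n:ℝ)*x < ⌊(n:ℝ)*x⌋₊ + 1 := Nat.lt_floor_add_one _
  have key : |(⌊(n:ℝ)*x⌋₊:ℝ) - (n:ℝ)*x| ≤ 1 := by
    rw [abs_le]; constructor <;> nlinarith
  have e : (⌊(n:ℝ)*x⌋₊:ℝ)/n - x = ((⌊(n:ℝ)*x⌋₊:ℝ) - (n:ℝ)*x)/n := by field_simp
  rw [e, abs_div, abs_of_pos hn']
  gcongr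

/-- Under the local alternative with level shift `h n` satisfying `n * h n / d n → c`,
the deterministic drift term of the CUSUM process converges uniformly on `[0,1]`
to `c · φ_τ`. -/
theorem stmt0 (τ : ℝ) (hτ : τ ∈ Set.Icc (0:ℝ) 1) (c : ℝ) (d h : ℕ → ℝ)
    (hd : ∀ n, 0 < d n)
    (hc : Tendsto (fun n : ℕ => (n : ℝ) * h n / d n) atTop (nhds c)) :
    TendstoUniformlyOn
      (fun (n : ℕ) (l : ℝ) =>
        (1 / ((n : ℝ) * d n)) *
          ∑ i ∈ Finset.Icc 1 ⌊(n : ℝ) * l⌋₊, ∑ j ∈ Finset.Icc (⌊(n : ℝ) * l⌋₊ + 1) n,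
            ((if j ≤ ⌊(n : ℝ) * τ⌋₊ then (0:ℝ) else h n)
              - (if i ≤ ⌊(n : ℝ) * τ⌋₊ then (0:ℝ) else h n)))
      (fun l => c * (if l ≤ τ then l * (1 - τ) else (1 - l) * τ))
      atTop (Set.Icc 0 1) := by
  obtain ⟨hτ0, hτ1⟩ := hτ
  rw [Metric.tendstoUniformlyOn_iff]
  intro ε hε
  have hA : ∀ᶠ n : ℕ in atTop, |(n:ℝ) * h n / d n - c| < ε/2 := by
    have := Metric.tendsto_nhds.mp hc (ε/2) (by linarith)
    simpa [Real.dist_eq] using this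
  have hB : ∀ᶠ n : ℕ in atTop, 2*|c|/(n:ℝ) < ε/2 := by
    have h2 := Metric.tendsto_nhds.mp (tendsto_const_div_atTop_nhds_zero_nat (2*|c|))
      (ε/2) (by linarith)
    filter_upwards [h2] with n hn
    rw [Real.dist_eq, sub_zero] at hn
    exact (le_abs_self _).trans_lt hn
  filter_upwards [hA, hB, eventually_ge_atTop 1] with n ha hb hn1
  intro l hl
  obtain ⟨hl0, hl1⟩ := hl
  have hn' : (0:ℝ) < n := by exact_mod_cast hn1
  have hm : ⌊(n:ℝ)*l⌋₊ ≤ n := by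
    calc ⌊(n:ℝ)*l⌋₊ ≤ ⌊(n:ℝ)⌋₊ := Nat.floor_mono (by nlinarith)
      _ = n := Nat.floor_natCast n
  have hk : ⌊(n:ℝ)*τ⌋₊ ≤ n := by
    calc ⌊(n:ℝ)*τ⌋₊ ≤ ⌊(n:ℝ)⌋₊ := Nat.floor_mono (by nlinarith)
      _ = n := Nat.floor_natCast n
  set m := ⌊(n:ℝ)*l⌋₊ with hm_def
  set k := ⌊(n:ℝ)*τ⌋₊ with hk_def
  rw [Real.dist_eq, abs_sub_comm]
  rw [aux_sum n m k hm hk (h n)]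
  have hd' : d n ≠ 0 := (hd n).ne'
  have hnne : (n:ℝ) ≠ 0 := hn'.ne'
  have e1 : 1/((n:ℝ)* d n) * (((min m k : ℕ):ℝ) * ((n:ℝ) - ((max m k : ℕ):ℝ)) * h n)
      = ((n:ℝ) * h n / d n) * ((((min m k : ℕ):ℝ)/n) * (((n:ℝ) - ((max m k : ℕ):ℝ))/n)) := by
    field_simp
  have e2 : c * (if l ≤ τ then l * (1 - τ) else (1 - l) * τ)
      = c * (min l τ * (1 - max l τ)) := by
    by_cases h' : l ≤ τ
    · rw [if_pos h', min_eq_left h', max_eq_right h']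
    · push_neg at h'
      rw [if_neg (not_le.mpr h'), min_eq_right h'.le, max_eq_left h'.le]
      ring
  rw [e1, e2]
  have hp : |(((min m k : ℕ):ℝ)/n)| ≤ 1 := by
    rw [abs_of_nonneg (by positivity), div_le_one hn']
    exact_mod_cast (min_le_left m k).trans hm
  have hq : |(((n:ℝ) - ((max m k : ℕ):ℝ))/n)| ≤ 1 := by
    rw [abs_of_nonneg (by
      apply div_nonneg _ hn'.le
      have : ((max m k : ℕ):ℝ) ≤ n := by exact_mod_cast max_le hm hk
      linarith), div_le_one hn']
    have : (0:ℝ) ≤ ((max m k : ℕ):ℝ) := Nat.cast_nonneg _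
    linarith
  have hp' : |min l τ| ≤ 1 := by
    rw [abs_of_nonneg (le_min hl0 hτ0)]
    exact (min_le_left _ _).trans hl1
  have hfl : |(m:ℝ)/n - l| ≤ 1/n := floor_close n hn1 l hl0
  have hfk : |(k:ℝ)/n - τ| ≤ 1/n := floor_close n hn1 τ hτ0
  have hpp : |(((min m k : ℕ):ℝ)/n) - min l τ| ≤ 1/n := by
    rw [Nat.cast_min, div_eq_mul_inv, min_mul_of_nonneg _ _ (by positivity : (0:ℝ) ≤ (n:ℝ)⁻¹)]
    refine (abs_min_sub_min_le_max _ _ _ _).trans (max_le ?_ ?_)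
    · simpa [div_eq_mul_inv] using hfl
    · simpa [div_eq_mul_inv] using hfk
  have hqq : |(((n:ℝ) - ((max m k : ℕ):ℝ))/n) - (1 - max l τ)| ≤ 1/n := by
    have e3 : (((n:ℝ) - ((max m k : ℕ):ℝ))/n) - (1 - max l τ)
        = -((((max m k : ℕ):ℝ)/n) - max l τ) := by
      field_simp
      ring
    rw [e3, abs_neg, Nat.cast_max, div_eq_mul_inv,
      max_mul_of_nonneg _ _ (by positivity : (0:ℝ) ≤ (n:ℝ)⁻¹)]
    refine (abs_max_sub_max_le_max _ _ _ _).trans (max_le ?_ ?_)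
    · simpa [div_eq_mul_inv] using hfl
    · simpa [div_eq_mul_inv] using hfk
  calc |((n:ℝ) * h n / d n) * ((((min m k : ℕ):ℝ)/n) * (((n:ℝ) - ((max m k : ℕ):ℝ))/n))
        - c * (min l τ * (1 - max l τ))|
      ≤ |(n:ℝ) * h n / d n - c|
        + |c| * (|(((min m k : ℕ):ℝ)/n) - min l τ| + |(((n:ℝ) - ((max m k : ℕ):ℝ))/n) - (1 - max l τ)|) :=
        prod_bd _ _ _ _ _ _ hp hq hp'
    _ ≤ |(n:ℝ) * h n / d n - c| + |c| * (1/n + 1/n) := by gcongr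
    _ = |(n:ℝ) * h n / d n - c| + 2*|c|/n := by ring
    _ < ε/2 + ε/2 := by exact add_lt_add ha hb
    _ = ε := by ring
end

section
/- Let L : (0,∞) → (0,∞) be measurable and slowly varying, and let 0 < D < 1. Then Σ_{k=1}^{n} k^{−D} L(k) is asymptotically equivalent to n^{1−D} L(n)/(1−D), i.e. the ratio of the two sides tends to 1 as n → ∞. -/
open Filter Finset

section SVproof
open MeasureTheory Set ENNReal

namespace SV




noncomputable def hf (L : ℝ → ℝ) (x : ℝ) : ℝ := Real.log (L (Real.exp x))

lemma hf_meas {L : ℝ → ℝ} (hLmeas : Measurable L) : Measurable (hf L) :=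
  (hLmeas.comp Real.measurable_exp).log

lemma hf_ptwise {L : ℝ → ℝ} (hLpos : ∀ x > (0:ℝ), 0 < L x)
    (hLsv : ∀ a > (0:ℝ), Tendsto (fun x => L (a * x) / L x) atTop (nhds 1)) (u : ℝ) :
    Tendsto (fun x => hf L (x + u) - hf L x) atTop (nhds 0) := by
  have h1 : Tendsto (fun x : ℝ => L (Real.exp u * Real.exp x) / L (Real.exp x)) atTop (nhds 1) :=
    (hLsv (Real.exp u) (Real.exp_pos u)).comp Real.tendsto_exp_atTop
  have h2 := (Real.continuousAt_log one_ne_zero).tendsto.comp h1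
  rw [Real.log_one] at h2
  refine h2.congr fun x => ?_
  show Real.log (L (Real.exp u * Real.exp x) / L (Real.exp x)) = _
  rw [Real.log_div (ne_of_gt (hLpos _ (by positivity))) (ne_of_gt (hLpos _ (Real.exp_pos x)))]
  rw [hf, hf, Real.exp_add, mul_comm]

lemma uct {L : ℝ → ℝ} (hLpos : ∀ x > (0:ℝ), 0 < L x) (hLmeas : Measurable L)
    (hLsv : ∀ a > (0:ℝ), Tendsto (fun x => L (a * x) / L x) atTop (nhds 1)) :
    ∀ ε > (0:ℝ), ∀ M : ℝ, ∀ᶠ x : ℝ in atTop, ∀ u ∈ Icc (0:ℝ) M,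
      |hf L (x + u) - hf L x| ≤ ε := by
  intro ε hε M
  by_contra hcon
  rw [not_eventually] at hcon
  have hseq : ∀ n : ℕ, ∃ x : ℝ, (n:ℝ) ≤ x ∧ ∃ u ∈ Icc (0:ℝ) M,
      ε < |hf L (x + u) - hf L x| := by
    intro n
    rcases (frequently_atTop.1 hcon (n:ℝ)) with ⟨x, hx, hx2⟩
    push_neg at hx2
    obtain ⟨u, hu, h⟩ := hx2
    exact ⟨x, hx, u, hu, h⟩
  choose x hx u hu hgt using hseq
  set h := hf L with hhdef
  have hmeas : Measurable h := hf_meas hLmeas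
  have hxj : Tendsto (fun j : ℕ => x j) atTop atTop :=
    tendsto_atTop_mono hx tendsto_natCast_atTop_atTop
  have hxuj : Tendsto (fun j : ℕ => x j + u j) atTop atTop :=
    tendsto_atTop_mono (fun j => le_add_of_nonneg_right (hu j).1) hxj
  set A : ℕ → Set ℝ := fun j => Icc 0 (M+1) ∩ {v | ε/2 ≤ |h (x j + v) - h (x j)|} with hA
  set C : ℕ → Set ℝ := fun j => Icc (0:ℝ) 1 ∩ {t | ε/2 ≤ |h (x j + u j + t) - h (x j + u j)|}
    with hC
  have hAm : ∀ j, MeasurableSet (A j) := fun j =>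
    measurableSet_Icc.inter <| measurableSet_le measurable_const
      ((hmeas.comp (measurable_const.add measurable_id)).sub measurable_const).abs
  have hCm : ∀ j, MeasurableSet (C j) := fun j =>
    measurableSet_Icc.inter <| measurableSet_le measurable_const
      ((hmeas.comp (measurable_const.add measurable_id)).sub measurable_const).abs
  have hAlim : Tendsto (fun j => volume (A j)) atTop (nhds 0) := by
    have := tendsto_measure_of_tendsto_indicator (A := (∅ : Set ℝ)) (μ := volume) atTop hAm
      (measurableSet_Icc (a := (0:ℝ)) (b := M+1)) measure_Icc_lt_top.ne
      (Eventually.of_forall fun j => inter_subset_left) ?_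
    · simpa using this
    · intro v
      have h1 := ((hf_ptwise hLpos hLsv v).comp hxj).abs
      rw [abs_zero] at h1
      have h2 := h1.eventually_lt_const (by linarith : (0:ℝ) < ε/2)
      filter_upwards [h2] with j hj
      simp only [hA, Set.mem_inter_iff, Set.mem_setOf_eq, Set.mem_empty_iff_false, iff_false]
      rintro ⟨-, hple⟩
      exact absurd hple (not_le.2 hj)
  have hClim : Tendsto (fun j => volume (C j)) atTop (nhds 0) := by
    have := tendsto_measure_of_tendsto_indicator (A := (∅ : Set ℝ)) (μ := volume) atTop hCm
      (measurableSet_Icc (a := (0:ℝ)) (b := 1)) measure_Icc_lt_top.ne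
      (Eventually.of_forall fun j => inter_subset_left) ?_
    · simpa using this
    · intro t
      have h1 := ((hf_ptwise hLpos hLsv t).comp hxuj).abs
      rw [abs_zero] at h1
      have h2 := h1.eventually_lt_const (by linarith : (0:ℝ) < ε/2)
      filter_upwards [h2] with j hj
      simp only [hC, Set.mem_inter_iff, Set.mem_setOf_eq, Set.mem_empty_iff_false, iff_false]
      rintro ⟨-, hple⟩
      exact absurd hple (not_le.2 hj)
  have h05 : (0:ℝ≥0∞) < 1/2 := by norm_num
  obtain ⟨j, hAj, hCj⟩ :=
    ((hAlim.eventually_lt_const h05).and (hClim.eventually_lt_const h05)).exists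
  have key : ¬ (Icc (0:ℝ) 1 ⊆ C j ∪ ((u j + ·) ⁻¹' A j)) := by
    intro hsub
    have h1 : volume (Icc (0:ℝ) 1) ≤ volume (C j) + volume ((u j + ·) ⁻¹' A j) :=
      (measure_mono hsub).trans (measure_union_le _ _)
    rw [measure_preimage_add, Real.volume_Icc] at h1
    have : (1:ℝ≥0∞) ≤ volume (C j) + volume (A j) := by simpa using h1
    have hlt : volume (C j) + volume (A j) < 1/2 + 1/2 := ENNReal.add_lt_add hCj hAj
    rw [ENNReal.add_halves] at hlt
    exact absurd (this.trans_lt hlt) (lt_irrefl _)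
  obtain ⟨t, ht, htn⟩ := Set.not_subset.1 key
  have htC : ¬ ε/2 ≤ |h (x j + u j + t) - h (x j + u j)| := by
    intro hle
    exact htn (Or.inl ⟨ht, hle⟩)
  have htA : ¬ ε/2 ≤ |h (x j + (u j + t)) - h (x j)| := by
    intro hle
    refine htn (Or.inr ?_)
    show u j + t ∈ A j
    exact ⟨⟨by linarith [(hu j).1, ht.1], by linarith [(hu j).2, ht.2]⟩, hle⟩
  have htri : |h (x j + u j) - h (x j)| ≤
      |h (x j + u j) - h (x j + u j + t)| + |h (x j + u j + t) - h (x j)| :=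
    abs_sub_le _ _ _
  rw [abs_sub_comm (h (x j + u j)) (h (x j + u j + t))] at htri
  have e1 : x j + (u j + t) = x j + u j + t := by ring
  rw [e1] at htA
  have := hgt j
  push_neg at htC htA
  linarith


lemma hf_log {L : ℝ → ℝ} {a : ℝ} (ha : 0 < a) : hf L (Real.log a) = Real.log (L a) := by
  rw [hf, Real.exp_log ha]

lemma log_ratio_bound {L : ℝ → ℝ} (hLpos : ∀ x > (0:ℝ), 0 < L x) {a b r : ℝ}
    (ha : 0 < a) (hb : 0 < b) (habs : |Real.log (L b) - Real.log (L a)| ≤ r) :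
    L b ≤ Real.exp r * L a ∧ L a ≤ Real.exp r * L b := by
  have h1 := abs_le.1 habs
  constructor
  · calc L b = Real.exp (Real.log (L b)) := (Real.exp_log (hLpos b hb)).symm
    _ ≤ Real.exp (r + Real.log (L a)) := Real.exp_le_exp.2 (by linarith [h1.2])
    _ = Real.exp r * L a := by rw [Real.exp_add, Real.exp_log (hLpos a ha)]
  · calc L a = Real.exp (Real.log (L a)) := (Real.exp_log (hLpos a ha)).symm
    _ ≤ Real.exp (r + Real.log (L b)) := Real.exp_le_exp.2 (by linarith [h1.1])
    _ = Real.exp r * L b := by rw [Real.exp_add, Real.exp_log (hLpos b hb)]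

lemma potter {L : ℝ → ℝ} (hLpos : ∀ x > (0:ℝ), 0 < L x) (hLmeas : Measurable L)
    (hLsv : ∀ a > (0:ℝ), Tendsto (fun x => L (a * x) / L x) atTop (nhds 1))
    {δ : ℝ} (hδ : 0 < δ) :
    ∃ X : ℝ, ∀ x y : ℝ, X ≤ x → x ≤ y → |hf L y - hf L x| ≤ δ * (y - x) + δ := by
  obtain ⟨X, hX⟩ := eventually_atTop.1 (uct hLpos hLmeas hLsv δ hδ 1)
  have main : ∀ n : ℕ, ∀ x : ℝ, X ≤ x → ∀ y : ℝ, x ≤ y → y ≤ x + n →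
      |hf L y - hf L x| ≤ δ * n := by
    intro n
    induction n with
    | zero =>
      intro x hXx y hxy hyx
      have : y = x := le_antisymm (by simpa using hyx) hxy
      simp [this]
    | succ n ih =>
      intro x hXx y hxy hyx
      by_cases hy : y ≤ x + 1
      · have h1 := hX x hXx (y - x) ⟨by linarith, by linarith⟩
        rw [add_sub_cancel] at h1
        have : δ ≤ δ * (n+1 : ℕ) := by
          have : (1:ℝ) ≤ (n+1 : ℕ) := by exact_mod_cast Nat.one_le_iff_ne_zero.2 (Nat.succ_ne_zero n)
          nlinarith
        linarith
      · push_neg at hy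
        have h1 := ih (x+1) (by linarith) y hy.le (by push_cast; push_cast at hyx; linarith)
        have h2 := hX x hXx 1 ⟨zero_le_one, le_refl 1⟩
        have htri : |hf L y - hf L x| ≤ |hf L y - hf L (x+1)| + |hf L (x+1) - hf L x| :=
          abs_sub_le _ _ _
        push_cast
        push_cast at h1
        linarith
  refine ⟨X, fun x y hXx hxy => ?_⟩
  have h1 := main ⌈y - x⌉₊ x hXx y hxy (by linarith [Nat.le_ceil (y - x)])
  have h2 : (⌈y - x⌉₊ : ℝ) ≤ (y - x) + 1 := (Nat.ceil_lt_add_one (by linarith)).le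
  calc |hf L y - hf L x| ≤ δ * ⌈y - x⌉₊ := h1
  _ ≤ δ * ((y - x) + 1) := by nlinarith
  _ = δ * (y - x) + δ := by ring

lemma potterL {L : ℝ → ℝ} (hLpos : ∀ x > (0:ℝ), 0 < L x) (hLmeas : Measurable L)
    (hLsv : ∀ a > (0:ℝ), Tendsto (fun x => L (a * x) / L x) atTop (nhds 1))
    {δ : ℝ} (hδ : 0 < δ) :
    ∃ N : ℕ, 1 ≤ N ∧ ∀ a b : ℝ, (N:ℝ) ≤ a → a ≤ b →
      L b ≤ Real.exp δ * (b/a) ^ δ * L a ∧ L a ≤ Real.exp δ * (b/a) ^ δ * L b := by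
  obtain ⟨X, hX⟩ := potter hLpos hLmeas hLsv hδ
  refine ⟨max 1 ⌈Real.exp X⌉₊, le_max_left _ _, ?_⟩
  intro a b ha hab
  have ha1 : (1:ℝ) ≤ a := by
    refine le_trans ?_ ha
    exact_mod_cast Nat.one_le_cast.2 (le_max_left _ _)
  have ha0 : 0 < a := lt_of_lt_of_le one_pos ha1
  have hb0 : 0 < b := ha0.trans_le hab
  have hXa : X ≤ Real.log a := by
    rw [Real.le_log_iff_exp_le ha0]
    calc Real.exp X ≤ (⌈Real.exp X⌉₊ : ℝ) := Nat.le_ceil _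
    _ ≤ ((max 1 ⌈Real.exp X⌉₊ : ℕ) : ℝ) := by exact_mod_cast Nat.cast_le.2 (le_max_right _ _)
    _ ≤ a := ha
  have habs := hX (Real.log a) (Real.log b) hXa (Real.log_le_log ha0 hab)
  rw [hf_log ha0, hf_log hb0] at habs
  have hr : Real.exp (δ * (Real.log b - Real.log a) + δ)
      = Real.exp δ * (b/a) ^ δ * 1 := by
    rw [Real.rpow_def_of_pos (div_pos hb0 ha0), Real.log_div hb0.ne' ha0.ne', Real.exp_add]
    ring_nf
  obtain ⟨h1, h2⟩ := log_ratio_bound hLpos ha0 hb0 habs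
  rw [hr] at h1 h2
  rw [mul_one] at h1 h2
  exact ⟨h1, h2⟩

lemma uct_ratio {L : ℝ → ℝ} (hLpos : ∀ x > (0:ℝ), 0 < L x) (hLmeas : Measurable L)
    (hLsv : ∀ a > (0:ℝ), Tendsto (fun x => L (a * x) / L x) atTop (nhds 1))
    {r : ℝ} (hr : 0 < r) {M : ℝ} (hM : 0 ≤ M) :
    ∃ X : ℝ, 0 < X ∧ ∀ a b : ℝ, X ≤ a → a ≤ b → b ≤ a * Real.exp M →
      L b ≤ Real.exp r * L a ∧ L a ≤ Real.exp r * L b := by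
  obtain ⟨X₀, hX₀⟩ := eventually_atTop.1 (uct hLpos hLmeas hLsv r hr M)
  refine ⟨max 1 (Real.exp X₀), lt_of_lt_of_le one_pos (le_max_left _ _), ?_⟩
  intro a b ha hab hba
  have ha0 : 0 < a := lt_of_lt_of_le one_pos ((le_max_left _ _).trans ha)
  have hb0 : 0 < b := ha0.trans_le hab
  have hX : X₀ ≤ Real.log a :=
    (Real.le_log_iff_exp_le ha0).2 ((le_max_right _ _).trans ha)
  have hu0 : 0 ≤ Real.log b - Real.log a := sub_nonneg.2 (Real.log_le_log ha0 hab)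
  have huM : Real.log b - Real.log a ≤ M := by
    have h2 : Real.log b ≤ Real.log a + M := by
      calc Real.log b ≤ Real.log (a * Real.exp M) := Real.log_le_log hb0 hba
      _ = Real.log a + M := by rw [Real.log_mul ha0.ne' (Real.exp_ne_zero _), Real.log_exp]
    linarith
  have habs := hX₀ (Real.log a) hX (Real.log b - Real.log a) ⟨hu0, huM⟩
  have e : Real.log a + (Real.log b - Real.log a) = Real.log b := by ring
  rw [e, hf_log ha0, hf_log hb0] at habs
  exact log_ratio_bound hLpos ha0 hb0 habs



lemma rpow_mvt {q : ℝ} (hq0 : 0 < q) {a : ℝ} (ha : 0 ≤ a) :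
    ∃ c ∈ Set.Ioo a (a+1), (a+1) ^ q - a ^ q = q * c ^ (q-1) := by
  have hcont : ContinuousOn (fun x : ℝ => x ^ q) (Set.Icc a (a+1)) :=
    fun x _ => (Real.continuousAt_rpow_const x q (Or.inr hq0.le)).continuousWithinAt
  have hder : ∀ x ∈ Set.Ioo a (a+1), HasDerivAt (fun x : ℝ => x ^ q) (q * x ^ (q-1)) x := by
    intro x hx
    have hx0 : x ≠ 0 := ne_of_gt (lt_of_le_of_lt ha hx.1)
    have := Real.hasDerivAt_rpow_const (x := x) (p := q) (Or.inl hx0)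
    simpa [mul_comm] using this
  obtain ⟨c, hc, hceq⟩ := exists_hasDerivAt_eq_slope (fun x : ℝ => x ^ q)
    (fun x => q * x ^ (q-1)) (by linarith) hcont hder
  refine ⟨c, hc, ?_⟩
  rw [hceq]
  simp

/-- `(a+1)^q - a^q ≤ q a^{q-1}` for `a > 0`, `0 < q < 1`. -/
lemma rpow_succ_sub_le {q : ℝ} (hq0 : 0 < q) (hq1 : q < 1) {a : ℝ} (ha : 0 < a) :
    (a+1) ^ q - a ^ q ≤ q * a ^ (q-1) := by
  obtain ⟨c, hc, hceq⟩ := rpow_mvt hq0 ha.le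
  rw [hceq]
  have : c ^ (q-1) ≤ a ^ (q-1) := Real.rpow_le_rpow_of_nonpos ha hc.1.le (by linarith)
  nlinarith

/-- `q (a+1)^{q-1} ≤ (a+1)^q - a^q` for `a ≥ 0`, `0 < q < 1`. -/
lemma le_rpow_succ_sub {q : ℝ} (hq0 : 0 < q) (hq1 : q < 1) {a : ℝ} (ha : 0 ≤ a) :
    q * (a+1) ^ (q-1) ≤ (a+1) ^ q - a ^ q := by
  obtain ⟨c, hc, hceq⟩ := rpow_mvt hq0 ha
  rw [hceq]
  have hc0 : 0 < c := lt_of_le_of_lt ha hc.1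
  have : (a+1) ^ (q-1) ≤ c ^ (q-1) := Real.rpow_le_rpow_of_nonpos hc0 hc.2.le (by linarith)
  nlinarith

/-- `Σ_{k=1}^n k^{-s} ≤ n^{1-s}/(1-s)` for `0 < s < 1`. -/
lemma sum_rpow_le {s : ℝ} (hs0 : 0 < s) (hs1 : s < 1) (n : ℕ) :
    ∑ k ∈ Icc 1 n, (k:ℝ) ^ (-s) ≤ (n:ℝ) ^ (1-s) / (1-s) := by
  have hq : 0 < 1 - s := by linarith
  induction n with
  | zero => simp [Real.zero_rpow hq.ne']
  | succ n ih =>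
    rw [Finset.sum_Icc_succ_top (Nat.one_le_iff_ne_zero.2 (Nat.succ_ne_zero n))]
    have key : (1-s) * ((n:ℝ)+1) ^ ((1-s)-1) ≤ ((n:ℝ)+1) ^ (1-s) - (n:ℝ) ^ (1-s) :=
      le_rpow_succ_sub hq (by linarith) (Nat.cast_nonneg n)
    have e1 : ((n:ℝ)+1) ^ ((1-s)-1) = ((n:ℝ)+1) ^ (-s) := by norm_num
    rw [e1] at key
    have h2 : ((n:ℝ)+1) ^ (-s) ≤ (((n:ℝ)+1) ^ (1-s) - (n:ℝ) ^ (1-s)) / (1-s) :=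
      (le_div_iff₀ hq).2 (by nlinarith)
    have e2 : ((n+1 : ℕ):ℝ) = (n:ℝ)+1 := by push_cast; ring
    rw [e2]
    have e3 : (n:ℝ) ^ (1-s) / (1-s) + (((n:ℝ)+1) ^ (1-s) - (n:ℝ) ^ (1-s)) / (1-s)
        = ((n:ℝ)+1) ^ (1-s) / (1-s) := by rw [← add_div]; ring_nf
    linarith

/-- `Σ_{k=m+1}^n k^{-D} ≥ ((n+1)^{1-D} - (m+1)^{1-D})/(1-D)`. -/
lemma sum_rpow_ge {D : ℝ} (hD0 : 0 < D) (hD1 : D < 1) (m : ℕ) :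
    ∀ n : ℕ, m ≤ n →
      (((n:ℝ)+1) ^ (1-D) - ((m:ℝ)+1) ^ (1-D)) / (1-D) ≤ ∑ k ∈ Icc (m+1) n, (k:ℝ) ^ (-D) := by
  have hq : 0 < 1 - D := by linarith
  intro n
  induction n with
  | zero =>
    intro hm
    interval_cases m
    simp
  | succ n ih =>
    intro hm
    rcases Nat.lt_or_ge n m with hnm | hnm
    · have : m = n + 1 := le_antisymm hm hnm
      subst this
      simp
    · have ihh := ih hnm
      rw [Finset.sum_Icc_succ_top (Nat.succ_le_succ hnm)]
      have key : (((n:ℝ)+1)+1) ^ (1-D) - ((n:ℝ)+1) ^ (1-D) ≤ (1-D) * ((n:ℝ)+1) ^ ((1-D)-1) :=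
        rpow_succ_sub_le hq (by linarith) (by positivity)
      have e1 : ((n:ℝ)+1) ^ ((1-D)-1) = ((n:ℝ)+1) ^ (-D) := by norm_num
      rw [e1] at key
      have h2 : ((((n:ℝ)+1)+1) ^ (1-D) - ((n:ℝ)+1) ^ (1-D)) / (1-D) ≤ ((n:ℝ)+1) ^ (-D) :=
        (div_le_iff₀ hq).2 (by rw [mul_comm]; linarith)
      have e2 : ((n+1 : ℕ):ℝ) = (n:ℝ)+1 := by push_cast; ring
      rw [e2]
      have e3 : ((((n:ℝ)+1)+1) ^ (1-D) - ((m:ℝ)+1) ^ (1-D)) / (1-D)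
          = (((n:ℝ)+1) ^ (1-D) - ((m:ℝ)+1) ^ (1-D)) / (1-D)
            + ((((n:ℝ)+1)+1) ^ (1-D) - ((n:ℝ)+1) ^ (1-D)) / (1-D) := by
        rw [← add_div]; ring_nf
      rw [e3]
      exact add_le_add ihh h2


lemma growth {L : ℝ → ℝ} (hLpos : ∀ x > (0:ℝ), 0 < L x) (hLmeas : Measurable L)
    (hLsv : ∀ a > (0:ℝ), Tendsto (fun x => L (a * x) / L x) atTop (nhds 1))
    {q : ℝ} (hq : 0 < q) :
    Tendsto (fun n : ℕ => (n:ℝ) ^ q * L n) atTop atTop := by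
  obtain ⟨N, hN1, hN⟩ := potterL hLpos hLmeas hLsv (δ := q/2) (by positivity)
  have hN0 : (0:ℝ) < N := by exact_mod_cast Nat.pos_of_ne_zero (by omega)
  have hLN : 0 < L N := hLpos _ hN0
  set c := Real.exp (-(q/2)) * (N:ℝ) ^ (q/2) * L N with hc
  have hc0 : 0 < c := mul_pos (mul_pos (Real.exp_pos _) (Real.rpow_pos_of_pos hN0 _)) hLN
  have lower : ∀ n : ℕ, N ≤ n → c * (n:ℝ) ^ (q/2) ≤ (n:ℝ) ^ q * L n := by
    intro n hn
    have hnN : (N:ℝ) ≤ n := by exact_mod_cast hn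
    have hn0 : (0:ℝ) < n := lt_of_lt_of_le hN0 hnN
    have h1 := (hN (N:ℝ) (n:ℝ) le_rfl hnN).2
    have hP : (0:ℝ) < Real.exp (-(q/2)) * (N:ℝ) ^ (q/2) * (n:ℝ) ^ (q/2) := by positivity
    have h2 := mul_le_mul_of_nonneg_right h1 hP.le
    have key : Real.exp (q/2) * ((n:ℝ)/(N:ℝ)) ^ (q/2) * Real.exp (-(q/2)) * (N:ℝ) ^ (q/2)
        * (n:ℝ) ^ (q/2) = (n:ℝ) ^ q := by
      rw [show Real.exp (q/2) * ((n:ℝ)/(N:ℝ)) ^ (q/2) * Real.exp (-(q/2)) * (N:ℝ) ^ (q/2)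
          * (n:ℝ) ^ (q/2)
        = (Real.exp (q/2) * Real.exp (-(q/2)))
          * (((((n:ℝ)/(N:ℝ)) ^ (q/2)) * (N:ℝ) ^ (q/2)) * (n:ℝ) ^ (q/2)) by ring,
        ← Real.exp_add, ← Real.mul_rpow (by positivity) (by positivity),
        div_mul_cancel₀ _ hN0.ne', ← Real.rpow_add hn0]
      norm_num
    calc c * (n:ℝ) ^ (q/2)
        = L N * (Real.exp (-(q/2)) * (N:ℝ) ^ (q/2) * (n:ℝ) ^ (q/2)) := by rw [hc]; ring
      _ ≤ (Real.exp (q/2) * ((n:ℝ)/(N:ℝ)) ^ (q/2) * L (n:ℝ))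
            * (Real.exp (-(q/2)) * (N:ℝ) ^ (q/2) * (n:ℝ) ^ (q/2)) := h2
      _ = (Real.exp (q/2) * ((n:ℝ)/(N:ℝ)) ^ (q/2) * Real.exp (-(q/2)) * (N:ℝ) ^ (q/2)
            * (n:ℝ) ^ (q/2)) * L (n:ℝ) := by ring
      _ = (n:ℝ) ^ q * L (n:ℝ) := by rw [key]
  have hlow : Tendsto (fun n : ℕ => c * (n:ℝ) ^ (q/2)) atTop atTop :=
    Tendsto.const_mul_atTop hc0
      ((tendsto_rpow_atTop (by positivity)).comp tendsto_natCast_atTop_atTop)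
  apply tendsto_atTop_mono' atTop ?_ hlow
  filter_upwards [eventually_ge_atTop N] with n hn using lower n hn

set_option maxHeartbeats 1000000 in
lemma karamata_up {L : ℝ → ℝ} (hLpos : ∀ x > (0:ℝ), 0 < L x) (hLmeas : Measurable L)
    (hLsv : ∀ a > (0:ℝ), Tendsto (fun x => L (a * x) / L x) atTop (nhds 1))
    {D : ℝ} (hD0 : 0 < D) (hD1 : D < 1) {θ : ℝ} (hθ : 0 < θ) :
    ∀ᶠ n : ℕ in atTop, ∑ k ∈ Finset.Icc 1 n, (k:ℝ) ^ (-D) * L k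
      ≤ (1+θ) * ((n:ℝ) ^ (1-D) * L n / (1-D)) := by
  set q := 1 - D with hqdef
  have hq : 0 < q := by rw [hqdef]; linarith
  have hq1 : q ≤ 1 := by rw [hqdef]; linarith
  obtain ⟨N, hN1, hN⟩ := potterL hLpos hLmeas hLsv (δ := q/2) (by positivity)
  obtain ⟨ε, hε0, hεhalf, hεpow⟩ : ∃ ε : ℝ, 0 < ε ∧ ε ≤ 1/2 ∧ ε ^ (q/2) ≤ θ/18 := by
    refine ⟨min (1/2 : ℝ) ((min (θ/18) 1) ^ (2/q)), ?_, min_le_left _ _, ?_⟩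
    · exact lt_min (by norm_num) (Real.rpow_pos_of_pos (lt_min (by positivity) one_pos) _)
    · have hmin0 : (0:ℝ) < min (θ/18) 1 := lt_min (by positivity) one_pos
      calc (min (1/2 : ℝ) ((min (θ/18) 1) ^ (2/q))) ^ (q/2)
          ≤ ((min (θ/18) 1) ^ (2/q)) ^ (q/2) := by
            apply Real.rpow_le_rpow ?_ (min_le_right _ _) (by positivity)
            exact le_min (by norm_num) (Real.rpow_pos_of_pos hmin0 _).le
        _ = min (θ/18) 1 := by
            rw [← Real.rpow_mul hmin0.le, show (2/q)*(q/2) = 1 by field_simp, Real.rpow_one]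
        _ ≤ θ/18 := min_le_left _ _
  have hM0 : 0 ≤ Real.log ε⁻¹ :=
    Real.log_nonneg (one_le_inv_iff₀.2 ⟨hε0, by linarith⟩)
  obtain ⟨r, hr0, hrexp⟩ : ∃ r : ℝ, 0 < r ∧ Real.exp r = 1 + θ/3 :=
    ⟨Real.log (1 + θ/3), Real.log_pos (by linarith), Real.exp_log (by linarith)⟩
  obtain ⟨X, hX0, hX⟩ := uct_ratio hLpos hLmeas hLsv hr0 hM0
  set C₀ := ∑ k ∈ Finset.Ioc 0 N, (k:ℝ) ^ (-D) * L k with hC₀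
  have hgrow := growth hLpos hLmeas hLsv hq
  have hev2 : ∀ᶠ n : ℕ in atTop, (max (max (N:ℝ) X) 1 + 1) / ε ≤ (n:ℝ) :=
    tendsto_natCast_atTop_atTop.eventually_ge_atTop _
  filter_upwards [hgrow.eventually_ge_atTop (3*q*C₀/θ), hev2] with n hBn hn
  set B := (n:ℝ) ^ q * L n with hBdef
  have hKmax : (1:ℝ) ≤ max (max (N:ℝ) X) 1 := le_max_right _ _
  have hKε : max (max (N:ℝ) X) 1 + 1 ≤ ε * n := by
    rw [div_le_iff₀ hε0] at hn
    nlinarith [hn]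
  have h2εn : (2:ℝ) ≤ ε * n := by linarith
  have hn2 : (2:ℝ) ≤ n :=
    le_trans h2εn (mul_le_of_le_one_left (Nat.cast_nonneg n) (by linarith))
  have hn0 : (0:ℝ) < n := by linarith
  have hLn : 0 < L n := hLpos _ hn0
  set m := ⌊ε * n⌋₊ with hmdef
  have hmle : (m:ℝ) ≤ ε * n := Nat.floor_le (by positivity)
  have hmge : ε * n - 1 ≤ m := (Nat.sub_one_lt_floor _).le
  have hNm : N ≤ m := by
    have h3 : (N:ℝ) ≤ max (max (N:ℝ) X) 1 := le_trans (le_max_left _ _) (le_max_left _ _)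
    exact_mod_cast show (N:ℝ) ≤ m by linarith
  have hmn : m ≤ n := by
    have : (m:ℝ) ≤ n :=
      hmle.trans (mul_le_of_le_one_left (Nat.cast_nonneg n) (by linarith))
    exact_mod_cast this
  have hicc : Finset.Icc 1 n = Finset.Ioc 0 n := by ext k; simp; omega
  have hsplit : ∑ k ∈ Finset.Icc 1 n, (k:ℝ) ^ (-D) * L k
      = C₀ + ∑ k ∈ Finset.Ioc N m, (k:ℝ) ^ (-D) * L k + ∑ k ∈ Finset.Ioc m n, (k:ℝ) ^ (-D) * L k := by
    rw [hicc, ← Finset.sum_Ioc_consecutive _ (Nat.zero_le m) hmn,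
      ← Finset.sum_Ioc_consecutive _ (Nat.zero_le N) hNm]
  -- tail bound T2
  have hsD : 0 < D + q/2 := by positivity
  have hsD1 : D + q/2 < 1 := by rw [hqdef]; linarith
  have hqhalf : 1 - (D + q/2) = q/2 := by rw [hqdef]; ring
  have hT2 : ∑ k ∈ Finset.Ioc N m, (k:ℝ) ^ (-D) * L k ≤ (θ/3) * (B / q) := by
    have hterm : ∀ k ∈ Finset.Ioc N m, (k:ℝ) ^ (-D) * L k
        ≤ (Real.exp (q/2) * (n:ℝ) ^ (q/2) * L n) * (k:ℝ) ^ (-(D+q/2)) := by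
      intro k hk
      rw [Finset.mem_Ioc] at hk
      have hkN : (N:ℝ) ≤ k := by exact_mod_cast hk.1.le
      have hk0 : (0:ℝ) < k := lt_of_lt_of_le (by exact_mod_cast Nat.pos_of_ne_zero (by omega)) hkN
      have hkn : (k:ℝ) ≤ n := by exact_mod_cast hk.2.trans hmn
      have hLk := (hN (k:ℝ) (n:ℝ) hkN hkn).2
      have eid : (Real.exp (q/2) * (n:ℝ) ^ (q/2) * L n) * (k:ℝ) ^ (-(D+q/2))
          = (k:ℝ) ^ (-D) * (Real.exp (q/2) * ((n:ℝ)/(k:ℝ)) ^ (q/2) * L n) := by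
        rw [show -(D+q/2) = -D + -(q/2) by ring, Real.rpow_add hk0,
          Real.rpow_neg (Nat.cast_nonneg k) (q/2),
          Real.div_rpow (Nat.cast_nonneg n) (Nat.cast_nonneg k)]
        ring
      rw [eid]
      exact mul_le_mul_of_nonneg_left hLk (Real.rpow_nonneg (Nat.cast_nonneg k) _)
    have hsum : ∑ k ∈ Finset.Ioc N m, (k:ℝ) ^ (-(D+q/2)) ≤ (m:ℝ) ^ (q/2) / (q/2) := by
      refine le_trans (Finset.sum_le_sum_of_subset_of_nonneg (t := Finset.Icc 1 m) ?_ ?_) ?_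
      · exact fun k hk => by rw [Finset.mem_Ioc] at hk; rw [Finset.mem_Icc]; omega
      · intro k _ _; exact Real.rpow_nonneg (Nat.cast_nonneg k) _
      · have := sum_rpow_le hsD hsD1 m
        rwa [hqhalf] at this
    have hE : (0:ℝ) ≤ Real.exp (q/2) * (n:ℝ) ^ (q/2) * L n := by positivity
    calc ∑ k ∈ Finset.Ioc N m, (k:ℝ) ^ (-D) * L k
        ≤ ∑ k ∈ Finset.Ioc N m, (Real.exp (q/2) * (n:ℝ) ^ (q/2) * L n) * (k:ℝ) ^ (-(D+q/2)) :=
          Finset.sum_le_sum hterm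
      _ = (Real.exp (q/2) * (n:ℝ) ^ (q/2) * L n) * ∑ k ∈ Finset.Ioc N m, (k:ℝ) ^ (-(D+q/2)) :=
          (Finset.mul_sum _ _ _).symm
      _ ≤ (Real.exp (q/2) * (n:ℝ) ^ (q/2) * L n) * ((m:ℝ) ^ (q/2) / (q/2)) :=
          mul_le_mul_of_nonneg_left hsum hE
      _ ≤ (3 * (n:ℝ) ^ (q/2) * L n) * ((θ/18 * (n:ℝ) ^ (q/2)) / (q/2)) := by
          have hexp : Real.exp (q/2) ≤ 3 := by
            calc Real.exp (q/2) ≤ Real.exp 1 := Real.exp_le_exp.2 (by linarith)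
              _ ≤ 3 := by linarith [Real.exp_one_lt_d9]
          have hm2 : (m:ℝ) ^ (q/2) ≤ θ/18 * (n:ℝ) ^ (q/2) := by
            calc (m:ℝ) ^ (q/2) ≤ (ε * n) ^ (q/2) :=
                  Real.rpow_le_rpow (Nat.cast_nonneg m) hmle (by positivity)
              _ = ε ^ (q/2) * (n:ℝ) ^ (q/2) :=
                  Real.mul_rpow hε0.le (Nat.cast_nonneg n)
              _ ≤ θ/18 * (n:ℝ) ^ (q/2) :=
                  mul_le_mul_of_nonneg_right hεpow (Real.rpow_nonneg (Nat.cast_nonneg n) _)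
          have hn_pow : (0:ℝ) ≤ (n:ℝ) ^ (q/2) := Real.rpow_nonneg (Nat.cast_nonneg n) _
          have hmp : (0:ℝ) ≤ (m:ℝ) ^ (q/2) := Real.rpow_nonneg (Nat.cast_nonneg m) _
          apply mul_le_mul
          · exact mul_le_mul_of_nonneg_right (mul_le_mul_of_nonneg_right hexp hn_pow) hLn.le
          · exact (div_le_div_iff_of_pos_right (by positivity)).2 hm2
          · positivity
          · positivity
      _ = (θ/3) * (B / q) := by
          rw [hBdef, show (n:ℝ) ^ q = (n:ℝ) ^ (q/2) * (n:ℝ) ^ (q/2) by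
            rw [← Real.rpow_add hn0]; congr 1; ring]
          field_simp
          try ring
  -- main part T3
  have hT3 : ∑ k ∈ Finset.Ioc m n, (k:ℝ) ^ (-D) * L k ≤ (1+θ/3) * (B / q) := by
    have hterm : ∀ k ∈ Finset.Ioc m n, (k:ℝ) ^ (-D) * L k ≤ ((1+θ/3) * L n) * (k:ℝ) ^ (-D) := by
      intro k hk
      rw [Finset.mem_Ioc] at hk
      have hkm : (m:ℝ) < k := by exact_mod_cast hk.1
      have hkε : ε * n < k := lt_of_lt_of_le (Nat.lt_floor_add_one _) (by exact_mod_cast hk.1)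
      have hkn : (k:ℝ) ≤ n := by exact_mod_cast hk.2
      have hkX : X ≤ k := by
        have : X ≤ max (max (N:ℝ) X) 1 := le_trans (le_max_right _ _) (le_max_left _ _)
        linarith
      have hnk : (n:ℝ) ≤ k * Real.exp (Real.log ε⁻¹) := by
        rw [Real.exp_log (inv_pos.2 hε0), ← div_eq_mul_inv, le_div_iff₀ hε0]
        nlinarith
      have hLk := (hX (k:ℝ) (n:ℝ) hkX hkn hnk).2
      rw [hrexp] at hLk
      calc (k:ℝ) ^ (-D) * L k ≤ (k:ℝ) ^ (-D) * ((1+θ/3) * L n) :=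
            mul_le_mul_of_nonneg_left hLk (Real.rpow_nonneg (Nat.cast_nonneg k) _)
        _ = ((1+θ/3) * L n) * (k:ℝ) ^ (-D) := by ring
    have hsum : ∑ k ∈ Finset.Ioc m n, (k:ℝ) ^ (-D) ≤ (n:ℝ) ^ q / q := by
      refine le_trans (Finset.sum_le_sum_of_subset_of_nonneg (t := Finset.Icc 1 n) ?_ ?_) ?_
      · exact fun k hk => by rw [Finset.mem_Ioc] at hk; rw [Finset.mem_Icc]; omega
      · intro k _ _; exact Real.rpow_nonneg (Nat.cast_nonneg k) _
      · have := sum_rpow_le hD0 hD1 n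
        rwa [← hqdef] at this
    calc ∑ k ∈ Finset.Ioc m n, (k:ℝ) ^ (-D) * L k
        ≤ ∑ k ∈ Finset.Ioc m n, ((1+θ/3) * L n) * (k:ℝ) ^ (-D) := Finset.sum_le_sum hterm
      _ = ((1+θ/3) * L n) * ∑ k ∈ Finset.Ioc m n, (k:ℝ) ^ (-D) := (Finset.mul_sum _ _ _).symm
      _ ≤ ((1+θ/3) * L n) * ((n:ℝ) ^ q / q) := by
          apply mul_le_mul_of_nonneg_left hsum (by positivity)
      _ = (1+θ/3) * (B / q) := by rw [hBdef]; ring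
  have hT1 : C₀ ≤ (θ/3) * (B / q) := by
    rw [div_le_iff₀ hθ] at hBn
    have h1 : C₀ ≤ B * θ / (3*q) := by
      rw [le_div_iff₀ (by positivity)]
      nlinarith [hBn]
    calc C₀ ≤ B * θ / (3*q) := h1
      _ = (θ/3) * (B / q) := by
          field_simp [hq.ne']
          try ring
  rw [hsplit]
  calc C₀ + ∑ k ∈ Finset.Ioc N m, (k:ℝ) ^ (-D) * L k
        + ∑ k ∈ Finset.Ioc m n, (k:ℝ) ^ (-D) * L k
      ≤ (θ/3) * (B/q) + (θ/3) * (B/q) + (1+θ/3) * (B/q) :=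
        add_le_add (add_le_add hT1 hT2) hT3
    _ = (1+θ) * (B/q) := by ring

set_option maxHeartbeats 1000000 in
lemma karamata_low {L : ℝ → ℝ} (hLpos : ∀ x > (0:ℝ), 0 < L x) (hLmeas : Measurable L)
    (hLsv : ∀ a > (0:ℝ), Tendsto (fun x => L (a * x) / L x) atTop (nhds 1))
    {D : ℝ} (hD0 : 0 < D) (hD1 : D < 1) {θ : ℝ} (hθ : 0 < θ) (hθ1 : θ < 1) :
    ∀ᶠ n : ℕ in atTop, (1-θ) * ((n:ℝ) ^ (1-D) * L n / (1-D))
      ≤ ∑ k ∈ Finset.Icc 1 n, (k:ℝ) ^ (-D) * L k := by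
  set q := 1 - D with hqdef
  have hq : 0 < q := by rw [hqdef]; linarith
  have hq1 : q ≤ 1 := by rw [hqdef]; linarith
  obtain ⟨ε, hε0, hεhalf, hεpow⟩ : ∃ ε : ℝ, 0 < ε ∧ ε ≤ 1/2 ∧ ε ^ q ≤ θ/4 := by
    refine ⟨min (1/2 : ℝ) ((min (θ/4) 1) ^ (1/q)), ?_, min_le_left _ _, ?_⟩
    · exact lt_min (by norm_num) (Real.rpow_pos_of_pos (lt_min (by positivity) one_pos) _)
    · have hmin0 : (0:ℝ) < min (θ/4) 1 := lt_min (by positivity) one_pos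
      calc (min (1/2 : ℝ) ((min (θ/4) 1) ^ (1/q))) ^ q
          ≤ ((min (θ/4) 1) ^ (1/q)) ^ q := by
            apply Real.rpow_le_rpow ?_ (min_le_right _ _) hq.le
            exact le_min (by norm_num) (Real.rpow_pos_of_pos hmin0 _).le
        _ = min (θ/4) 1 := by
            rw [← Real.rpow_mul hmin0.le, show (1/q)*q = 1 by field_simp, Real.rpow_one]
        _ ≤ θ/4 := min_le_left _ _
  have hM0 : 0 ≤ Real.log ε⁻¹ :=
    Real.log_nonneg (one_le_inv_iff₀.2 ⟨hε0, by linarith⟩)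
  obtain ⟨r, hr0, hrexp⟩ : ∃ r : ℝ, 0 < r ∧ Real.exp r = (1 - θ/2)⁻¹ := by
    refine ⟨Real.log (1 - θ/2)⁻¹, Real.log_pos ?_, Real.exp_log (by rw [inv_pos]; linarith)⟩
    rw [one_lt_inv_iff₀]
    constructor <;> linarith
  obtain ⟨X, hX0, hX⟩ := uct_ratio hLpos hLmeas hLsv hr0 hM0
  have hev2 : ∀ᶠ n : ℕ in atTop, (max X 1 + 1) / ε ≤ (n:ℝ) :=
    tendsto_natCast_atTop_atTop.eventually_ge_atTop _
  filter_upwards [hev2] with n hn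
  have hKmax : (1:ℝ) ≤ max X 1 := le_max_right _ _
  have hKε : max X 1 + 1 ≤ ε * n := by
    rw [div_le_iff₀ hε0] at hn
    nlinarith [hn]
  have h2εn : (2:ℝ) ≤ ε * n := by linarith
  have hn2 : (2:ℝ) ≤ n :=
    le_trans h2εn (mul_le_of_le_one_left (Nat.cast_nonneg n) (by linarith))
  have hn0 : (0:ℝ) < n := by linarith
  have hLn : 0 < L n := hLpos _ hn0
  set m := ⌊ε * n⌋₊ with hmdef
  have hmle : (m:ℝ) ≤ ε * n := Nat.floor_le (by positivity)
  have hmn : m ≤ n := by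
    have : (m:ℝ) ≤ n :=
      hmle.trans (mul_le_of_le_one_left (Nat.cast_nonneg n) (by linarith))
    exact_mod_cast this
  -- per-term lower bound on the main block
  have hterm : ∀ k ∈ Finset.Icc (m+1) n, ((1-θ/2) * L n) * (k:ℝ) ^ (-D)
      ≤ (k:ℝ) ^ (-D) * L k := by
    intro k hk
    rw [Finset.mem_Icc] at hk
    have hkm1 : (m:ℝ) + 1 ≤ k := by exact_mod_cast hk.1
    have hkε : ε * n < k := lt_of_lt_of_le (Nat.lt_floor_add_one _) hkm1
    have hkn : (k:ℝ) ≤ n := by exact_mod_cast hk.2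
    have hkX : X ≤ k := by linarith [le_max_left X 1]
    have hnk : (n:ℝ) ≤ k * Real.exp (Real.log ε⁻¹) := by
      rw [Real.exp_log (inv_pos.2 hε0), ← div_eq_mul_inv, le_div_iff₀ hε0]
      nlinarith
    have hLk := (hX (k:ℝ) (n:ℝ) hkX hkn hnk).1
    rw [hrexp] at hLk
    have hLge : (1-θ/2) * L n ≤ L k := by
      have h12 : (0:ℝ) < 1 - θ/2 := by linarith
      calc (1-θ/2) * L n ≤ (1-θ/2) * ((1-θ/2)⁻¹ * L k) :=
            mul_le_mul_of_nonneg_left hLk h12.le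
        _ = L k := by rw [← mul_assoc, mul_inv_cancel₀ h12.ne', one_mul]
    calc ((1-θ/2) * L n) * (k:ℝ) ^ (-D) = (k:ℝ) ^ (-D) * ((1-θ/2) * L n) := by ring
      _ ≤ (k:ℝ) ^ (-D) * L k :=
          mul_le_mul_of_nonneg_left hLge (Real.rpow_nonneg (Nat.cast_nonneg k) _)
  -- sum lower bound
  have hsum := sum_rpow_ge hD0 hD1 m n hmn
  rw [← hqdef] at hsum
  have hm1 : ((m:ℝ)+1) ^ q ≤ (θ/2) * (n:ℝ) ^ q := by
    have h2m : (m:ℝ) + 1 ≤ 2*ε*n := by nlinarith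
    calc ((m:ℝ)+1) ^ q ≤ (2*ε*(n:ℝ)) ^ q := by
          apply Real.rpow_le_rpow (by positivity) h2m hq.le
      _ = (2:ℝ) ^ q * ε ^ q * (n:ℝ) ^ q := by
          rw [Real.mul_rpow (by positivity) (Nat.cast_nonneg n),
            Real.mul_rpow (by norm_num) hε0.le]
      _ ≤ 2 * (θ/4) * (n:ℝ) ^ q := by
          have h2q : (2:ℝ) ^ q ≤ 2 := by
            calc (2:ℝ) ^ q ≤ (2:ℝ) ^ (1:ℝ) := Real.rpow_le_rpow_of_exponent_le (by norm_num) hq1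
              _ = 2 := Real.rpow_one 2
          have hnq : (0:ℝ) ≤ (n:ℝ) ^ q := Real.rpow_nonneg (Nat.cast_nonneg n) _
          apply mul_le_mul_of_nonneg_right ?_ hnq
          apply mul_le_mul h2q hεpow (by positivity) (by norm_num)
      _ = (θ/2) * (n:ℝ) ^ q := by ring
  have hnq1 : (n:ℝ) ^ q ≤ ((n:ℝ)+1) ^ q :=
    Real.rpow_le_rpow (Nat.cast_nonneg n) (by linarith) hq.le
  have hmain : (1-θ/2) * (n:ℝ) ^ q / q ≤ ∑ k ∈ Finset.Icc (m+1) n, (k:ℝ) ^ (-D) := by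
    refine le_trans ?_ hsum
    rw [div_le_div_iff₀ hq hq]
    nlinarith [hm1, hnq1]
  have hPpos : (0:ℝ) ≤ (n:ℝ) ^ q * L n / q :=
    (div_pos (mul_pos (Real.rpow_pos_of_pos hn0 _) hLn) hq).le
  have hθθ : (1-θ) ≤ (1-θ/2)*(1-θ/2) := by nlinarith
  calc (1-θ) * ((n:ℝ) ^ q * L n / q)
      ≤ ((1-θ/2)*(1-θ/2)) * ((n:ℝ) ^ q * L n / q) :=
        mul_le_mul_of_nonneg_right hθθ hPpos
    _ = ((1-θ/2) * L n) * ((1-θ/2) * (n:ℝ) ^ q / q) := by ring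
    _ ≤ ((1-θ/2) * L n) * ∑ k ∈ Finset.Icc (m+1) n, (k:ℝ) ^ (-D) :=
        mul_le_mul_of_nonneg_left hmain (mul_nonneg (by linarith) hLn.le)
    _ = ∑ k ∈ Finset.Icc (m+1) n, ((1-θ/2) * L n) * (k:ℝ) ^ (-D) :=
        Finset.mul_sum _ _ _
    _ ≤ ∑ k ∈ Finset.Icc (m+1) n, (k:ℝ) ^ (-D) * L k := Finset.sum_le_sum hterm
    _ ≤ ∑ k ∈ Finset.Icc 1 n, (k:ℝ) ^ (-D) * L k := by
        refine Finset.sum_le_sum_of_subset_of_nonneg ?_ ?_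
        · exact fun k hk => by rw [Finset.mem_Icc] at hk; rw [Finset.mem_Icc]; omega
        · intro k hk _
          rw [Finset.mem_Icc] at hk
          have hk0 : (0:ℝ) < k := by exact_mod_cast Nat.pos_of_ne_zero (by omega)
          exact mul_nonneg (Real.rpow_nonneg (Nat.cast_nonneg k) _) (hLpos _ hk0).le

end SV

/-- For a slowly varying `L` and `0 < D < 1`,
`Σ_{k=1}^n k^{−D} L(k) ∼ n^{1−D} L(n)/(1−D)`. -/
theorem stmt3 (L : ℝ → ℝ) (hLpos : ∀ x > (0:ℝ), 0 < L x)
    (hLmeas : Measurable L)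
    (hLsv : ∀ a > (0:ℝ), Tendsto (fun x => L (a * x) / L x) atTop (nhds 1))
    (D : ℝ) (hD0 : 0 < D) (hD1 : D < 1) :
    Tendsto
      (fun n : ℕ =>
        (∑ k ∈ Finset.Icc 1 n, (k : ℝ) ^ (-D) * L k) /
          ((n : ℝ) ^ (1 - D) * L n / (1 - D)))
      atTop (nhds 1) := by
  have hq : (0:ℝ) < 1 - D := by linarith
  refine tendsto_order.2 ⟨?_, ?_⟩
  · intro c hc
    set θ := min ((1-c)/2) (1/2) with hθdef
    have hθ0 : 0 < θ := lt_min (by linarith) (by norm_num)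
    have hθ1 : θ < 1 := lt_of_le_of_lt (min_le_right _ _) (by norm_num)
    have hcθ : c < 1 - θ := by
      have h1 : θ ≤ (1-c)/2 := min_le_left _ _
      linarith
    filter_upwards [SV.karamata_low hLpos hLmeas hLsv hD0 hD1 hθ0 hθ1,
      eventually_ge_atTop 1] with n hlow hn1
    have hn0 : (0:ℝ) < n := by exact_mod_cast Nat.pos_of_ne_zero (by omega)
    have hB : 0 < (n:ℝ) ^ (1-D) * L n / (1-D) :=
      div_pos (mul_pos (Real.rpow_pos_of_pos hn0 _) (hLpos _ hn0)) hq
    rw [lt_div_iff₀ hB]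
    calc c * ((n:ℝ) ^ (1-D) * L n / (1-D))
        < (1-θ) * ((n:ℝ) ^ (1-D) * L n / (1-D)) := mul_lt_mul_of_pos_right hcθ hB
      _ ≤ _ := hlow
  · intro c hc
    have hθ0 : 0 < (c-1)/2 := by linarith
    filter_upwards [SV.karamata_up hLpos hLmeas hLsv hD0 hD1 hθ0,
      eventually_ge_atTop 1] with n hup hn1
    have hn0 : (0:ℝ) < n := by exact_mod_cast Nat.pos_of_ne_zero (by omega)
    have hB : 0 < (n:ℝ) ^ (1-D) * L n / (1-D) :=
      div_pos (mul_pos (Real.rpow_pos_of_pos hn0 _) (hLpos _ hn0)) hq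
    rw [div_lt_iff₀ hB]
    exact lt_of_le_of_lt hup (mul_lt_mul_of_pos_right (by linarith) hB)

end SVproof
end

section
/- Let η and ζ be independent random variables, each distributed according to the standard Gaussian measure on ℝ, let ρ ∈ [−1,1] and m ∈ ℕ. Then E[ He_m(ρ·η + √(1−ρ²)·ζ) · He_m(η) ] = m! · ρ^m. -/
open MeasureTheory ProbabilityTheory Polynomial Real
open scoped ENNReal NNReal

local notation "γ" => gaussianReal 0 1

-- Core integrability
lemma core_int (n : ℕ) : Integrable (fun x : ℝ => x ^ n * Real.exp (-(x ^ 2 / 2))) := by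
  have h4 : Integrable (fun x : ℝ => Real.exp (-(4⁻¹ : ℝ) * x ^ 2)) :=
    integrable_exp_neg_mul_sq (by norm_num)
  refine (h4.const_mul ((n.factorial : ℝ) * Real.exp 1)).mono' ?_ ?_
  · exact ((continuous_pow n).mul (by continuity)).aestronglyMeasurable
  · refine Filter.Eventually.of_forall (fun x => ?_)
    have h1 : |x| ^ n ≤ n.factorial * Real.exp |x| := by
      have := Real.pow_div_factorial_le_exp (x:=|x|) (abs_nonneg x) n
      have hf : (0:ℝ) < n.factorial := by positivity
      calc |x| ^ n = |x| ^ n / n.factorial * n.factorial := by field_simp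
        _ ≤ Real.exp |x| * n.factorial := by
            apply mul_le_mul_of_nonneg_right this hf.le
        _ = _ := mul_comm _ _
    have h2 : |x| - x ^ 2 / 4 ≤ 1 := by nlinarith [sq_nonneg (|x| - 2), sq_abs x]
    rw [norm_mul, norm_pow, Real.norm_eq_abs, Real.norm_eq_abs, Real.abs_exp]
    calc |x| ^ n * Real.exp (-(x ^ 2 / 2))
        ≤ (n.factorial * Real.exp |x|) * Real.exp (-(x ^ 2 / 2)) := by
          apply mul_le_mul_of_nonneg_right h1 (Real.exp_pos _).le
      _ = n.factorial * Real.exp (|x| - x^2/4) * Real.exp (-(4⁻¹:ℝ) * x ^ 2) := by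
          rw [mul_assoc, ← Real.exp_add, mul_assoc, ← Real.exp_add,
            mul_eq_mul_left_iff, Real.exp_eq_exp]
          left; ring
      _ ≤ n.factorial * Real.exp 1 * Real.exp (-(4⁻¹:ℝ) * x ^ 2) := by
          have := Real.exp_le_exp.mpr h2
          have h3 : (0:ℝ) ≤ Real.exp (-(4⁻¹:ℝ) * x^2) := (Real.exp_pos _).le
          have hf : (0:ℝ) ≤ n.factorial := by positivity
          have := mul_le_mul_of_nonneg_left this hf
          exact mul_le_mul_of_nonneg_right this h3

lemma pdf_eq : gaussianPDFReal 0 1 = fun x =>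
    (Real.sqrt (2 * Real.pi))⁻¹ * Real.exp (-(x ^ 2 / 2)) := by
  ext x
  simp only [gaussianPDFReal, NNReal.coe_one, mul_one, sub_zero]
  norm_num
  left; ring

lemma gauss_density : γ = (volume : Measure ℝ).withDensity
    (fun x => ((gaussianPDFReal 0 1 x).toNNReal : ℝ≥0∞)) := by
  rw [gaussianReal_of_var_ne_zero 0 one_ne_zero]
  rfl

lemma meas_pdfnn : Measurable (fun x => (gaussianPDFReal 0 1 x).toNNReal) :=
  (measurable_gaussianPDFReal 0 1).real_toNNReal

lemma integral_gauss_eq (f : ℝ → ℝ) :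
    ∫ x, f x ∂γ = ∫ x, f x * gaussianPDFReal 0 1 x := by
  rw [gauss_density, integral_withDensity_eq_integral_smul meas_pdfnn f]
  congr 1; ext x
  rw [NNReal.smul_def, Real.coe_toNNReal _ (gaussianPDFReal_nonneg 0 1 x), smul_eq_mul, mul_comm]

lemma integrable_gauss_iff (f : ℝ → ℝ) :
    Integrable f γ ↔ Integrable (fun x => f x * gaussianPDFReal 0 1 x) := by
  rw [gauss_density,
    integrable_withDensity_iff meas_pdfnn.coe_nnreal_ennreal
      (Filter.Eventually.of_forall fun x => ENNReal.coe_lt_top)]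
  apply integrable_congr
  refine Filter.Eventually.of_forall fun x => ?_
  simp [Real.coe_toNNReal _ (gaussianPDFReal_nonneg 0 1 x)]

lemma poly_exp_int (q : ℝ[X]) : Integrable (fun x => eval x q * Real.exp (-(x ^ 2 / 2))) := by
  induction q using Polynomial.induction_on' with
  | add p r hp hr =>
      have := hp.add hr
      apply this.congr
      refine Filter.Eventually.of_forall fun x => ?_
      simp [eval_add]; ring
  | monomial n c =>
      have := (core_int n).const_mul c
      apply this.congr
      refine Filter.Eventually.of_forall fun x => ?_
      simp [eval_monomial]; ring

lemma polypdf_int (q : ℝ[X]) :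
    Integrable (fun x => eval x q * gaussianPDFReal 0 1 x) := by
  rw [pdf_eq]
  have := (poly_exp_int q).const_mul (Real.sqrt (2 * Real.pi))⁻¹
  apply this.congr
  refine Filter.Eventually.of_forall fun x => ?_
  ring

lemma poly_int (q : ℝ[X]) : Integrable (fun x => eval x q) γ :=
  (integrable_gauss_iff _).mpr (polypdf_int q)

lemma pdf_hasDeriv (x : ℝ) :
    HasDerivAt (gaussianPDFReal 0 1) (-x * gaussianPDFReal 0 1 x) x := by
  rw [pdf_eq]
  have h1 : HasDerivAt (fun x : ℝ => -(x ^ 2 / 2)) (-x) x := by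
    simpa using ((hasDerivAt_pow 2 x).div_const 2).fun_neg
  have h2 := h1.exp
  have h3 := h2.const_mul (Real.sqrt (2 * Real.pi))⁻¹
  refine h3.congr_deriv ?_
  ring

lemma ibp (q : ℝ[X]) :
    ∫ x, x * eval x q ∂γ = ∫ x, eval x (derivative q) ∂γ := by
  rw [integral_gauss_eq, integral_gauss_eq]
  have key := integral_mul_deriv_eq_deriv_mul_of_integrable
    (u := fun x => eval x q) (u' := fun x => eval x (derivative q))
    (v := gaussianPDFReal 0 1) (v' := fun x => -x * gaussianPDFReal 0 1 x)
    (fun x _ => q.hasDerivAt x) (fun x _ => pdf_hasDeriv x)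
    ?_ ?_ ?_
  · have lhs : ∫ x, (fun x => eval x q) x * (fun x => -x * gaussianPDFReal 0 1 x) x
        = - ∫ x, x * eval x q * gaussianPDFReal 0 1 x := by
      rw [← integral_neg]
      congr 1; ext x; ring
    rw [lhs] at key
    have := neg_injective key
    rw [this]
  · -- u * v'
    apply ((polypdf_int (X * q)).neg).congr
    refine Filter.Eventually.of_forall fun x => ?_
    simp [eval_mul]; ring
  · apply (polypdf_int (derivative q)).congr
    refine Filter.Eventually.of_forall fun x => ?_
    simp
  · apply (polypdf_int q).congr
    refine Filter.Eventually.of_forall fun x => ?_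
    simp

noncomputable def HH (n : ℕ) : ℝ[X] := (hermite n).map (Int.castRingHom ℝ)

lemma HH_zero : HH 0 = 1 := by simp [HH]

lemma HH_succ (n : ℕ) : HH (n + 1) = X * HH n - derivative (HH n) := by
  simp [HH, hermite_succ, Polynomial.derivative_map]

lemma aeval_eq_eval_HH (x : ℝ) (n : ℕ) : aeval x (hermite n) = eval x (HH n) := by
  rw [HH, aeval_def, eval_map, algebraMap_int_eq]

lemma derivative_HH (n : ℕ) :
    derivative (HH (n + 1)) = C ((n : ℝ) + 1) * HH n := by
  induction n with
  | zero => simp [HH_succ, HH_zero]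
  | succ n ih =>
      rw [HH_succ (n+1), derivative_sub, derivative_mul, derivative_X, one_mul, ih,
        derivative_mul, derivative_C, zero_mul, zero_add]
      have h : (X : ℝ[X]) * (C ((n:ℝ)+1) * HH n) - C ((n:ℝ)+1) * derivative (HH n)
          = C ((n:ℝ)+1) * HH (n+1) := by rw [HH_succ n]; ring
      rw [sub_eq_iff_eq_add] at h ⊢
      rw [h, show (((n+1):ℕ):ℝ) + 1 = ((n:ℝ)+1) + 1 by push_cast; ring]
      simp only [C_add, C_1]
      ring

noncomputable def L (s t : ℝ) : ℝ[X] := C s + C t * X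

lemma eval_L (q : ℝ[X]) (s t y : ℝ) : eval y (q.comp (L s t)) = eval (s + t * y) q := by
  simp [L, eval_comp]

lemma int_affine (q : ℝ[X]) (s t : ℝ) : Integrable (fun y => eval (s + t * y) q) γ := by
  apply (poly_int (q.comp (L s t))).congr
  exact Filter.Eventually.of_forall fun y => eval_L q s t y

lemma int_affine_mul (q : ℝ[X]) (s t : ℝ) :
    Integrable (fun y => y * eval (s + t * y) q) γ := by
  apply (poly_int (X * q.comp (L s t))).congr
  refine Filter.Eventually.of_forall fun y => ?_
  simp [eval_L q s t y]

lemma ibp_affine (q : ℝ[X]) (s t : ℝ) :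
    ∫ y, y * eval (s + t * y) q ∂γ = t * ∫ y, eval (s + t * y) (derivative q) ∂γ := by
  have h1 : ∫ y, y * eval (s + t * y) q ∂γ = ∫ y, y * eval y (q.comp (L s t)) ∂γ := by
    apply integral_congr_ae
    exact Filter.Eventually.of_forall fun y => by simp only [eval_L]
  rw [h1, ibp]
  have h2 : derivative (q.comp (L s t)) = C t * (derivative q).comp (L s t) := by
    rw [derivative_comp]
    simp [L]
  rw [h2]
  rw [show (∫ y, eval y (C t * (derivative q).comp (L s t)) ∂γ)
      = ∫ y, t * eval y ((derivative q).comp (L s t)) ∂γ by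
    apply integral_congr_ae; exact Filter.Eventually.of_forall fun y => by simp]
  rw [integral_const_mul]
  congr 1
  apply integral_congr_ae
  exact Filter.Eventually.of_forall fun y => by simp only [eval_L]

lemma gauss_mean_zero : ∫ y, y ∂γ = 0 := by
  have := ibp 1
  simpa using this

lemma semigroup (a b x : ℝ) (hab : a ^ 2 + b ^ 2 = 1) :
    ∀ n, ∫ y, eval (a * x + b * y) (HH n) ∂γ = a ^ n * eval x (HH n) := by
  intro n
  induction n using Nat.twoStepInduction with
  | zero => simp [HH_zero]
  | one =>
      have hX : HH 1 = X := by rw [HH_succ, HH_zero]; simp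
      rw [hX]
      simp only [eval_X]
      have hb : Integrable (fun y : ℝ => b * y) γ :=
        ((poly_int X).const_mul b).congr (Filter.Eventually.of_forall fun y => by simp)
      rw [integral_add (integrable_const _) hb, integral_const, integral_const_mul,
        gauss_mean_zero]
      simp
  | more n ih1 ih2 =>
      -- ih1 : P n, ih2 : P (n+1)
      have expand : ∀ y : ℝ, eval (a * x + b * y) (HH (n + 2)) =
          (a * x) * eval (a * x + b * y) (HH (n + 1))
          + y * (b * eval (a * x + b * y) (HH (n + 1)))
          - ((n : ℝ) + 1) * eval (a * x + b * y) (HH n) := by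
        intro y
        rw [HH_succ (n + 1), eval_sub, eval_mul, eval_X, derivative_HH, eval_mul, eval_C]
        ring
      rw [integral_congr_ae (Filter.Eventually.of_forall expand)]
      have i1 : Integrable (fun y => (a * x) * eval (a * x + b * y) (HH (n+1))) γ :=
        (int_affine (HH (n+1)) (a*x) b).const_mul _
      have i2 : Integrable (fun y => y * (b * eval (a * x + b * y) (HH (n+1)))) γ := by
        apply ((int_affine_mul (HH (n+1)) (a*x) b).const_mul b).congr
        exact Filter.Eventually.of_forall fun y => by ring
      have i3 : Integrable (fun y => ((n : ℝ) + 1) * eval (a * x + b * y) (HH n)) γ :=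
        (int_affine (HH n) (a*x) b).const_mul _
      have i12 : Integrable (fun y => (a * x) * eval (a * x + b * y) (HH (n+1))
          + y * (b * eval (a * x + b * y) (HH (n+1)))) γ := i1.add i2
      rw [integral_sub i12 i3, integral_add i1 i2, integral_const_mul,
        integral_const_mul, ih2, ih1]
      have hmul : ∫ y, y * (b * eval (a * x + b * y) (HH (n+1))) ∂γ
          = b * ∫ y, y * eval (a * x + b * y) (HH (n+1)) ∂γ := by
        rw [← integral_const_mul]
        apply integral_congr_ae
        exact Filter.Eventually.of_forall fun y => by ring
      rw [hmul, ibp_affine, derivative_HH]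
      have : ∫ y, eval (a * x + b * y) (C ((n:ℝ)+1) * HH n) ∂γ
          = ((n:ℝ)+1) * ∫ y, eval (a * x + b * y) (HH n) ∂γ := by
        rw [← integral_const_mul]
        apply integral_congr_ae
        exact Filter.Eventually.of_forall fun y => by simp
      rw [this, ih1]
      have hb2 : b ^ 2 = 1 - a ^ 2 := by linarith
      have target : eval x (HH (n+2)) = x * eval x (HH (n+1)) - ((n:ℝ)+1) * eval x (HH n) := by
        rw [HH_succ (n+1), eval_sub, eval_mul, eval_X, derivative_HH, eval_mul, eval_C]
      rw [target]
      linear_combination ((n:ℝ)+1) * a^n * eval x (HH n) * hab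

lemma norm_sq : ∀ m : ℕ, ∫ x, (eval x (HH m)) ^ 2 ∂γ = (m.factorial : ℝ) := by
  intro m
  induction m with
  | zero => simp [HH_zero]
  | succ m ih =>
      have expand : ∀ x : ℝ, (eval x (HH (m+1))) ^ 2 =
          x * eval x (HH m * HH (m + 1)) - eval x (derivative (HH m) * HH (m + 1)) := by
        intro x
        rw [HH_succ m]
        simp only [eval_mul, eval_sub, eval_X]
        ring
      rw [integral_congr_ae (Filter.Eventually.of_forall expand)]
      have i1 : Integrable (fun x => x * eval x (HH m * HH (m+1))) γ := by
        apply (poly_int (X * (HH m * HH (m+1)))).congr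
        exact Filter.Eventually.of_forall fun x => by simp
      have i2 : Integrable (fun x => eval x (derivative (HH m) * HH (m+1))) γ :=
        poly_int _
      rw [integral_sub i1 i2, ibp, derivative_mul, derivative_HH]
      have split : ∀ x : ℝ, eval x (derivative (HH m) * HH (m + 1) + HH m * (C ((m:ℝ)+1) * HH m))
          = eval x (derivative (HH m) * HH (m+1)) + ((m:ℝ)+1) * (eval x (HH m))^2 := by
        intro x; simp [eval_add, eval_mul]; ring
      rw [integral_congr_ae (Filter.Eventually.of_forall split),
        integral_add i2 (((poly_int (HH m * HH m)).const_mul ((m:ℝ)+1)).congr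
          (Filter.Eventually.of_forall fun x => by simp only [eval_mul]; ring))]
      have : ∫ x, ((m:ℝ)+1) * (eval x (HH m))^2 ∂γ = ((m:ℝ)+1) * ∫ x, (eval x (HH m))^2 ∂γ :=
        integral_const_mul _ _
      rw [this, ih]
      simp [Nat.factorial_succ]

lemma poly_bound (q : ℝ[X]) : ∃ C : ℝ, 0 ≤ C ∧
    ∀ z : ℝ, |eval z q| ≤ C * (1 + |z|) ^ q.natDegree := by
  refine ⟨∑ i ∈ Finset.range (q.natDegree + 1), |q.coeff i|, Finset.sum_nonneg fun _ _ => abs_nonneg _, fun z => ?_⟩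
  rw [Polynomial.eval_eq_sum_range]
  refine (Finset.abs_sum_le_sum_abs _ _).trans ?_
  rw [Finset.sum_mul]
  apply Finset.sum_le_sum
  intro i hi
  rw [abs_mul, abs_pow]
  apply mul_le_mul_of_nonneg_left _ (abs_nonneg _)
  calc |z| ^ i ≤ (1 + |z|) ^ i := by
        apply pow_le_pow_left₀ (abs_nonneg z)
        linarith
    _ ≤ (1 + |z|) ^ q.natDegree := by
        apply pow_le_pow_right₀ (by linarith [abs_nonneg z])
        exact Nat.lt_succ_iff.mp (Finset.mem_range.mp hi)

lemma int_one_abs (n : ℕ) : Integrable (fun x => (1 + |x|) ^ n) γ := by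
  have h : ∀ x : ℝ, (1 + |x|) ^ n
      = ∑ k ∈ Finset.range (n + 1), (n.choose k : ℝ) * |x| ^ k := by
    intro x
    rw [add_comm, add_pow]
    apply Finset.sum_congr rfl
    intro k hk
    simp; ring
  rw [show (fun x : ℝ => (1 + |x|) ^ n)
      = fun x => ∑ k ∈ Finset.range (n + 1), (n.choose k : ℝ) * |x| ^ k from funext h]
  apply integrable_finset_sum
  intro k hk
  apply Integrable.const_mul
  have := (poly_int (X ^ k)).abs
  apply this.congr
  refine Filter.Eventually.of_forall fun x => ?_
  simp [abs_pow]

/-- For a standard bivariate Gaussian pair `(ρη + √(1−ρ²)ζ, η)` with correlation `ρ`,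
`E[He_m(ρη + √(1−ρ²)ζ) · He_m(η)] = m! · ρ^m`, where `He_m` is the m-th
probabilists' Hermite polynomial. -/
theorem stmt5 {Ω : Type*} [MeasurableSpace Ω] (P : Measure Ω) [IsProbabilityMeasure P]
    (η ζ : Ω → ℝ) (hη : Measurable η) (hζ : Measurable ζ)
    (hindep : IndepFun η ζ P)
    (hηlaw : P.map η = gaussianReal 0 1) (hζlaw : P.map ζ = gaussianReal 0 1)
    (ρ : ℝ) (hρ : ρ ∈ Set.Icc (-1 : ℝ) 1) (m : ℕ) :
    ∫ ω, (Polynomial.aeval (ρ * η ω + Real.sqrt (1 - ρ ^ 2) * ζ ω) (hermite m)) *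
        (Polynomial.aeval (η ω) (hermite m)) ∂P
      = (Nat.factorial m : ℝ) * ρ ^ m := by
  obtain ⟨hρ1, hρ2⟩ := hρ
  set s : ℝ := Real.sqrt (1 - ρ ^ 2) with hs
  have h1ρ : (0:ℝ) ≤ 1 - ρ ^ 2 := by nlinarith
  have hab : ρ ^ 2 + s ^ 2 = 1 := by
    rw [hs, Real.sq_sqrt h1ρ]; ring
  have hs0 : 0 ≤ s := Real.sqrt_nonneg _
  have hs1 : s ≤ 1 := by nlinarith [Real.sq_sqrt h1ρ]
  -- the function on ℝ × ℝ
  set F : ℝ × ℝ → ℝ := fun z => eval (ρ * z.1 + s * z.2) (HH m) * eval z.1 (HH m) with hF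
  have hFcont : Continuous F := by
    apply Continuous.mul
    · exact (HH m).continuous.comp (by fun_prop)
    · exact (HH m).continuous.comp continuous_fst
  -- joint law
  have hmap : P.map (fun ω => (η ω, ζ ω)) = (γ).prod γ := by
    have h := (indepFun_iff_map_prod_eq_prod_map_map hη.aemeasurable hζ.aemeasurable).mp hindep
    rw [hηlaw, hζlaw] at h
    exact h
  -- integrability of F on the product
  obtain ⟨C, hC0, hCb⟩ := poly_bound (HH m)
  set N := (HH m).natDegree with hN
  have hFint : Integrable F ((γ).prod γ) := by
    have hg : Integrable (fun x : ℝ => (C * C) * ((1 + |x|) ^ (N + N))) γ :=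
      (int_one_abs (N + N)).const_mul _
    have hh : Integrable (fun y : ℝ => (1 + |y|) ^ N) γ := int_one_abs N
    have hprod : Integrable (fun z : ℝ × ℝ =>
        ((C * C) * ((1 + |z.1|) ^ (N + N))) * ((1 + |z.2|) ^ N)) ((γ).prod γ) :=
      hg.mul_prod hh
    apply hprod.mono' hFcont.aestronglyMeasurable
    refine Filter.Eventually.of_forall fun z => ?_
    have b1 : |eval (ρ * z.1 + s * z.2) (HH m)| ≤ C * ((1 + |z.1|) * (1 + |z.2|)) ^ N := by
      refine (hCb _).trans ?_
      apply mul_le_mul_of_nonneg_left _ hC0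
      apply pow_le_pow_left₀ (by positivity)
      have : |ρ * z.1 + s * z.2| ≤ |z.1| + |z.2| := by
        refine (abs_add_le _ _).trans ?_
        apply add_le_add
        · rw [abs_mul]
          exact mul_le_of_le_one_left (abs_nonneg _) (abs_le.mpr ⟨hρ1, hρ2⟩)
        · rw [abs_mul]
          apply mul_le_of_le_one_left (abs_nonneg _)
          rw [abs_of_nonneg hs0]; exact hs1
      nlinarith [abs_nonneg z.1, abs_nonneg z.2, this]
    have b2 : |eval z.1 (HH m)| ≤ C * (1 + |z.1|) ^ N := hCb _
    rw [Real.norm_eq_abs, hF]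
    simp only
    rw [abs_mul]
    calc |eval (ρ * z.1 + s * z.2) (HH m)| * |eval z.1 (HH m)|
        ≤ (C * ((1 + |z.1|) * (1 + |z.2|)) ^ N) * (C * (1 + |z.1|) ^ N) := by
          apply mul_le_mul b1 b2 (abs_nonneg _) (by positivity)
      _ = C * C * (1 + |z.1|) ^ (N + N) * (1 + |z.2|) ^ N := by
          rw [mul_pow, pow_add]; ring
  -- main computation
  have step1 : ∫ ω, (aeval (ρ * η ω + s * ζ ω) (hermite m)) * (aeval (η ω) (hermite m)) ∂P
      = ∫ z, F z ∂((γ).prod γ) := by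
    rw [← hmap, integral_map (hη.prodMk hζ).aemeasurable]
    · apply integral_congr_ae
      refine Filter.Eventually.of_forall fun ω => ?_
      rw [hF]; simp only
      rw [aeval_eq_eval_HH, aeval_eq_eval_HH]
    · rw [hmap]; exact hFcont.aestronglyMeasurable
  rw [step1, integral_prod F hFint]
  have inner : ∀ x : ℝ, ∫ y, F (x, y) ∂γ = ρ ^ m * ((eval x (HH m)) ^ 2) := by
    intro x
    rw [hF]; simp only
    rw [integral_mul_const, semigroup ρ s x hab m]
    ring
  rw [integral_congr_ae (Filter.Eventually.of_forall inner), integral_const_mul, norm_sq]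
  ring
end

section
/- Let G : ℝ → ℝ be nondecreasing and right-continuous with ∫ |x·G(x)| dγ(x) < ∞ and ∫ φ(t) dμ_G(t) < ∞, where μ_G is the Lebesgue–Stieltjes measure associated with G. Then ∫ x·G(x) dγ(x) = ∫ φ(t) dμ_G(t). In particular, if G is not constant, then the first-order Hermite coefficient a_1 = E[ξ·G(ξ)] = ∫ x·G(x) dγ(x) is strictly positive. -/
open MeasureTheory ProbabilityTheory Real Set Filter

noncomputable def phi6 (x : ℝ) : ℝ := (Real.sqrt (2 * Real.pi))⁻¹ * Real.exp (-(x ^ 2) / 2)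

lemma phi6_pos (x : ℝ) : 0 < phi6 x := by
  have : 0 < Real.sqrt (2 * Real.pi) := Real.sqrt_pos.2 (by positivity)
  unfold phi6; positivity

lemma hasDerivAt_neg_phi6 (x : ℝ) :
    HasDerivAt (fun y => -phi6 y) (x * phi6 x) x := by
  have h1 : HasDerivAt (fun y : ℝ => -(y ^ 2) / 2) (-x) x := by
    have := ((hasDerivAt_pow 2 x).neg).div_const 2
    refine this.congr_deriv ?_
    push_cast
    ring
  have h2 := (h1.exp.const_mul ((Real.sqrt (2 * Real.pi))⁻¹)).neg
  refine h2.congr_deriv ?_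
  unfold phi6
  ring

lemma tendsto_phi6_atTop : Tendsto phi6 atTop (nhds 0) := by
  have h1 : Tendsto (fun x : ℝ => -(x ^ 2) / 2) atTop atBot := by
    apply Tendsto.atBot_div_const (by norm_num)
    have : Tendsto (fun x : ℝ => x ^ 2) atTop atTop :=
      tendsto_pow_atTop (by norm_num)
    simpa [Function.comp_def] using tendsto_neg_atTop_atBot.comp this
  have h2 := (Real.tendsto_exp_atBot.comp h1).const_mul ((Real.sqrt (2 * Real.pi))⁻¹)
  rw [mul_zero] at h2
  exact h2

lemma tendsto_phi6_atBot : Tendsto phi6 atBot (nhds 0) := by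
  have h0 : Tendsto (fun x : ℝ => x ^ 2) atBot atTop := by
    have h := (tendsto_pow_atTop (α := ℝ) (n := 2) (by norm_num)).comp
      tendsto_neg_atBot_atTop
    have : (fun x : ℝ => x ^ 2) = (fun x : ℝ => x ^ 2) ∘ (fun x : ℝ => -x) := by
      funext x; simp [Function.comp, neg_pow]
    rw [this]; exact h
  have h1 : Tendsto (fun x : ℝ => -(x ^ 2) / 2) atBot atBot := by
    apply Tendsto.atBot_div_const (by norm_num)
    simpa [Function.comp_def] using tendsto_neg_atTop_atBot.comp h0
  have h2 := (Real.tendsto_exp_atBot.comp h1).const_mul ((Real.sqrt (2 * Real.pi))⁻¹)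
  rw [mul_zero] at h2
  exact h2

lemma integrable_xphi6 : Integrable (fun x => x * phi6 x) := by
  have h : (fun x => x * phi6 x)
      = fun x => (Real.sqrt (2 * Real.pi))⁻¹ * (x * Real.exp (-(1/2) * x ^ 2)) := by
    funext x
    rw [phi6, show -(x ^ 2) / 2 = -(1/2) * x ^ 2 by ring]
    ring
  rw [h]
  exact (integrable_mul_exp_neg_mul_sq (by norm_num : (0:ℝ) < 1/2)).const_mul _

lemma integral_Ioi_xphi6 (t : ℝ) : ∫ x in Ioi t, x * phi6 x = phi6 t := by
  have := integral_Ioi_of_hasDerivAt_of_tendsto' (f := fun y => -phi6 y)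
    (f' := fun x => x * phi6 x) (a := t) (m := 0)
    (fun x _ => hasDerivAt_neg_phi6 x) integrable_xphi6.integrableOn
    (by simpa using tendsto_phi6_atTop.neg)
  simpa using this

lemma integral_Iic_negxphi6 (t : ℝ) : ∫ x in Iic t, -(x * phi6 x) = phi6 t := by
  have := integral_Iic_of_hasDerivAt_of_tendsto' (f := phi6)
    (f' := fun x => -(x * phi6 x)) (a := t) (m := 0)
    (fun x _ => by simpa [Pi.neg_def] using (hasDerivAt_neg_phi6 x).neg)
    integrable_xphi6.neg.integrableOn tendsto_phi6_atBot
  simpa using this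

lemma integral_xphi6_zero : ∫ x, x * phi6 x = 0 := by
  have h1 : ∫ x in Iic (0:ℝ), x * phi6 x = -phi6 0 := by
    have := integral_Iic_negxphi6 0
    rw [integral_neg] at this
    linarith
  have h2 := integral_Ioi_xphi6 0
  have hu : (univ : Set ℝ) = Iic 0 ∪ Ioi 0 := (Iic_union_Ioi).symm
  rw [← setIntegral_univ (f := fun x => x * phi6 x), hu,
    setIntegral_union (Iic_disjoint_Ioi le_rfl) measurableSet_Ioi
      integrable_xphi6.integrableOn integrable_xphi6.integrableOn, h1, h2]
  ring

section Kernel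
variable (G : StieltjesFunction ℝ)

noncomputable def K6 (G : StieltjesFunction ℝ) (x t : ℝ) : ℝ :=
  (Ioc (0:ℝ) x).indicator (fun _ => x * phi6 x) t
    - (Ioc x (0:ℝ)).indicator (fun _ => x * phi6 x) t

lemma K6_integrable_right (x : ℝ) : Integrable (K6 G x) G.measure := by
  have h1 : Integrable ((Ioc (0:ℝ) x).indicator fun _ => x * phi6 x) G.measure := by
    rw [integrable_indicator_iff measurableSet_Ioc]
    refine integrableOn_const ?_
    rw [G.measure_Ioc]; exact ENNReal.ofReal_ne_top
  have h2 : Integrable ((Ioc x (0:ℝ)).indicator fun _ => x * phi6 x) G.measure := by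
    rw [integrable_indicator_iff measurableSet_Ioc]
    refine integrableOn_const ?_
    rw [G.measure_Ioc]; exact ENNReal.ofReal_ne_top
  exact h1.sub h2

lemma max_sub_max (a : ℝ) : max a 0 - max (-a) 0 = a := by
  rcases le_total a 0 with h | h
  · rw [max_eq_right h, max_eq_left (by linarith)]; ring
  · rw [max_eq_left h, max_eq_right (by linarith)]; ring

lemma K6_integral_right (x : ℝ) :
    ∫ t, K6 G x t ∂G.measure = x * phi6 x * (G x - G 0) := by
  have h1 : Integrable ((Ioc (0:ℝ) x).indicator fun _ => x * phi6 x) G.measure := by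
    rw [integrable_indicator_iff measurableSet_Ioc]
    exact integrableOn_const (by rw [G.measure_Ioc]; exact ENNReal.ofReal_ne_top)
  have h2 : Integrable ((Ioc x (0:ℝ)).indicator fun _ => x * phi6 x) G.measure := by
    rw [integrable_indicator_iff measurableSet_Ioc]
    exact integrableOn_const (by rw [G.measure_Ioc]; exact ENNReal.ofReal_ne_top)
  rw [show (fun t => K6 G x t) = fun t => ((Ioc (0:ℝ) x).indicator (fun _ => x * phi6 x) t
      - (Ioc x (0:ℝ)).indicator (fun _ => x * phi6 x) t) from rfl,
    integral_sub h1 h2, integral_indicator_const _ measurableSet_Ioc,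
    integral_indicator_const _ measurableSet_Ioc, measureReal_def, measureReal_def, G.measure_Ioc, G.measure_Ioc,
    ENNReal.toReal_ofReal', ENNReal.toReal_ofReal', smul_eq_mul, smul_eq_mul]
  have h := max_sub_max (G x - G 0)
  rw [show -(G x - G 0) = G 0 - G x by ring] at h
  rw [← sub_mul, h]; ring

end Kernel


lemma K6_integral_left (G : StieltjesFunction ℝ) (t : ℝ) :
    ∫ x, K6 G x t = phi6 t := by
  rcases lt_or_ge 0 t with ht | ht
  · have h : (fun x => K6 G x t) = (Ici t).indicator (fun x => x * phi6 x) := by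
      funext x
      simp only [K6, Set.indicator_apply, mem_Ioc, mem_Ici]
      by_cases hA : t ≤ x
      · rw [if_pos ⟨ht, hA⟩, if_neg (fun hB => absurd hB.2 (by linarith)), if_pos hA]
        ring
      · rw [if_neg (fun hAB => hA hAB.2), if_neg (fun hB => absurd hB.2 (by linarith)),
          if_neg hA]
        ring
    rw [h, integral_indicator measurableSet_Ici, integral_Ici_eq_integral_Ioi,
      integral_Ioi_xphi6]
  · have h : (fun x => K6 G x t) = fun x => (Iio t).indicator (fun x => -(x * phi6 x)) x := by
      funext x
      simp only [K6, Set.indicator_apply, mem_Ioc, mem_Iio]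
      by_cases hB : x < t
      · rw [if_neg (fun hA => absurd hA.1 (by linarith)), if_pos ⟨hB, ht⟩, if_pos hB]
        ring
      · rw [if_neg (fun hA => absurd hA.1 (by linarith)), if_neg (fun hAB => hB hAB.1),
          if_neg hB]
        ring
    rw [h, integral_indicator measurableSet_Iio, ← integral_Iic_eq_integral_Iio,
      integral_Iic_negxphi6]

lemma continuous_phi6 : Continuous phi6 := by
  unfold phi6; fun_prop

lemma K6_norm_integral (G : StieltjesFunction ℝ) (x : ℝ) :
    ∫ t, ‖K6 G x t‖ ∂G.measure = ‖x * phi6 x * (G x - G 0)‖ := by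
  rcases le_or_gt 0 x with hx | hx
  · have he : Ioc x (0:ℝ) = ∅ := Ioc_eq_empty (not_lt.mpr hx)
    have hfun : (fun t => ‖K6 G x t‖)
        = (Ioc (0:ℝ) x).indicator (fun _ => ‖x * phi6 x‖) := by
      funext t
      rw [K6, he, Set.indicator_empty]
      simp only [Pi.zero_apply, sub_zero]
      rw [norm_indicator_eq_indicator_norm]
    rw [hfun, integral_indicator_const _ measurableSet_Ioc, measureReal_def, G.measure_Ioc,
      ENNReal.toReal_ofReal (sub_nonneg.2 (G.mono hx)), smul_eq_mul,
      Real.norm_eq_abs, Real.norm_eq_abs,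
      abs_mul (x * phi6 x) (G x - G 0), abs_of_nonneg (sub_nonneg.2 (G.mono hx))]
    ring
  · have he : Ioc (0:ℝ) x = ∅ := Ioc_eq_empty (not_lt.mpr hx.le)
    have hfun : (fun t => ‖K6 G x t‖)
        = (Ioc x (0:ℝ)).indicator (fun _ => ‖x * phi6 x‖) := by
      funext t
      rw [K6, he, Set.indicator_empty]
      simp only [Pi.zero_apply, zero_sub, norm_neg]
      rw [norm_indicator_eq_indicator_norm]
    rw [hfun, integral_indicator_const _ measurableSet_Ioc, measureReal_def, G.measure_Ioc,
      ENNReal.toReal_ofReal (sub_nonneg.2 (G.mono hx.le)), smul_eq_mul,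
      Real.norm_eq_abs, Real.norm_eq_abs,
      abs_mul (x * phi6 x) (G x - G 0), abs_of_nonpos (sub_nonpos.2 (G.mono hx.le))]
    ring

lemma K6_aemeas (G : StieltjesFunction ℝ) :
    AEStronglyMeasurable (Function.uncurry (K6 G))
      ((volume : Measure ℝ).prod G.measure) := by
  have hf : Measurable fun p : ℝ × ℝ => p.1 * phi6 p.1 :=
    measurable_fst.mul (continuous_phi6.measurable.comp measurable_fst)
  have hA : MeasurableSet {p : ℝ × ℝ | 0 < p.2 ∧ p.2 ≤ p.1} :=
    (measurableSet_lt measurable_const measurable_snd).inter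
      (measurableSet_le measurable_snd measurable_fst)
  have hB : MeasurableSet {p : ℝ × ℝ | p.1 < p.2 ∧ p.2 ≤ 0} :=
    (measurableSet_lt measurable_fst measurable_snd).inter
      (measurableSet_le measurable_snd measurable_const)
  have heq : Function.uncurry (K6 G) = fun p : ℝ × ℝ =>
      {p : ℝ × ℝ | 0 < p.2 ∧ p.2 ≤ p.1}.indicator (fun p => p.1 * phi6 p.1) p
      - {p : ℝ × ℝ | p.1 < p.2 ∧ p.2 ≤ 0}.indicator (fun p => p.1 * phi6 p.1) p := by
    funext p
    simp only [Function.uncurry, K6, Set.indicator_apply, mem_Ioc, mem_setOf_eq]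
  rw [heq]
  exact ((hf.indicator hA).sub (hf.indicator hB)).stronglyMeasurable.aestronglyMeasurable

lemma K6_integrable_prod (G : StieltjesFunction ℝ)
    (hi : Integrable (fun x => x * phi6 x * (G x - G 0)) (volume : Measure ℝ)) :
    Integrable (Function.uncurry (K6 G)) ((volume : Measure ℝ).prod G.measure) := by
  refine (integrable_prod_iff (K6_aemeas G)).2 ⟨?_, ?_⟩
  · exact Filter.Eventually.of_forall fun x => K6_integrable_right G x
  · have : (fun x => ∫ t, ‖Function.uncurry (K6 G) (x, t)‖ ∂G.measure)
        = fun x => ‖x * phi6 x * (G x - G 0)‖ := by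
      funext x
      exact K6_norm_integral G x
    rw [this]
    exact hi.norm

lemma gaussianPDFReal_eq_phi6 : gaussianPDFReal 0 1 = phi6 := by
  funext x
  simp [gaussianPDFReal, phi6]

lemma gauss_integral_eq (f : ℝ → ℝ) :
    ∫ x, f x ∂(gaussianReal 0 1) = ∫ x, phi6 x * f x := by
  rw [gaussianReal_of_var_ne_zero 0 one_ne_zero]
  have hd : gaussianPDF 0 1 = fun x => ((gaussianPDFReal 0 1 x).toNNReal : ENNReal) := rfl
  rw [hd, integral_withDensity_eq_integral_smul
    ((measurable_gaussianPDFReal 0 1).real_toNNReal) f]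
  congr 1
  funext x
  rw [NNReal.smul_def, Real.coe_toNNReal _ (gaussianPDFReal_nonneg 0 1 x),
    gaussianPDFReal_eq_phi6, smul_eq_mul]

lemma gauss_integrable_iff (f : ℝ → ℝ) (hf : AEStronglyMeasurable f (volume : Measure ℝ)) :
    Integrable f (gaussianReal 0 1) ↔ Integrable (fun x => f x * phi6 x) volume := by
  rw [gaussianReal_of_var_ne_zero 0 one_ne_zero,
    integrable_withDensity_iff (measurable_gaussianPDF 0 1)
      (Filter.Eventually.of_forall fun x => ENNReal.ofReal_lt_top)]
  constructor <;> intro h <;> refine h.congr ?_ <;>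
    filter_upwards with x <;>
    rw [gaussianPDF, ENNReal.toReal_ofReal (gaussianPDFReal_nonneg 0 1 x),
      gaussianPDFReal_eq_phi6]


/-- Integration by parts for the first Hermite coefficient: for a nondecreasing
right-continuous `G` (a Stieltjes function), `∫ x G(x) dγ(x) = ∫ φ dμ_G`, and if `G` is
not constant then `a₁ = E[ξ G(ξ)] > 0`. Here `γ` is the standard Gaussian measure and
`φ` its density. -/
theorem stmt6 (G : StieltjesFunction ℝ)
    (h1 : Integrable (fun x => x * G x) (gaussianReal 0 1))
    (h2 : Integrable (fun t => (Real.sqrt (2 * Real.pi))⁻¹ * Real.exp (-(t ^ 2) / 2))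
      G.measure) :
    (∫ x, x * G x ∂(gaussianReal 0 1)
        = ∫ t, (Real.sqrt (2 * Real.pi))⁻¹ * Real.exp (-(t ^ 2) / 2) ∂G.measure) ∧
      ((∃ x y, G x ≠ G y) → 0 < ∫ x, x * G x ∂(gaussianReal 0 1)) := by
  have hGmeas : AEStronglyMeasurable (fun x => x * G x) (volume : Measure ℝ) :=
    (measurable_id.mul G.mono.measurable).aestronglyMeasurable
  -- integrability of x φ(x) G(x) w.r.t. Lebesgue
  have h1' : Integrable (fun x => (x * G x) * phi6 x) volume :=
    (gauss_integrable_iff (fun x => x * G x) hGmeas).1 h1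
  have hi : Integrable (fun x => x * phi6 x * (G x - G 0)) volume := by
    have heq : (fun x => x * phi6 x * (G x - G 0))
        = fun x => (x * G x) * phi6 x - G 0 * (x * phi6 x) := by
      funext x; ring
    rw [heq]
    exact h1'.sub (integrable_xphi6.const_mul (G 0))
  -- Fubini
  have hswap : ∫ x, (∫ t, K6 G x t ∂G.measure) = ∫ t, (∫ x, K6 G x t) ∂G.measure :=
    integral_integral_swap (K6_integrable_prod G hi)
  have hmain : ∫ x, x * phi6 x * (G x - G 0) = ∫ t, phi6 t ∂G.measure := by
    calc ∫ x, x * phi6 x * (G x - G 0)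
        = ∫ x, (∫ t, K6 G x t ∂G.measure) := by
          congr 1; funext x; exact (K6_integral_right G x).symm
      _ = ∫ t, (∫ x, K6 G x t) ∂G.measure := hswap
      _ = ∫ t, phi6 t ∂G.measure := by
          congr 1; funext t; exact K6_integral_left G t
  have hpart1 : ∫ x, x * G x ∂(gaussianReal 0 1) = ∫ t, phi6 t ∂G.measure := by
    rw [gauss_integral_eq (fun x => x * G x)]
    have heq : (fun x => phi6 x * (x * G x))
        = fun x => x * phi6 x * (G x - G 0) + G 0 * (x * phi6 x) := by
      funext x; ring
    rw [heq, integral_add hi (integrable_xphi6.const_mul (G 0)), integral_const_mul,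
      integral_xphi6_zero, mul_zero, add_zero, hmain]
  refine ⟨hpart1, ?_⟩
  rintro ⟨x, y, hxy⟩
  rw [hpart1]
  have h2' : Integrable phi6 G.measure := h2
  rw [integral_pos_iff_support_of_nonneg (fun t => (phi6_pos t).le) h2']
  have hsupp : Function.support phi6 = univ :=
    Set.eq_univ_of_forall fun t => (phi6_pos t).ne'
  rw [hsupp]
  obtain ⟨a, b, hab⟩ : ∃ a b, G a < G b := by
    rcases le_total x y with h | h
    · exact ⟨x, y, lt_of_le_of_ne (G.mono h) hxy⟩
    · exact ⟨y, x, lt_of_le_of_ne (G.mono h) (Ne.symm hxy)⟩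
  calc (0 : ENNReal) < G.measure (Ioc a b) := by
        rw [G.measure_Ioc]; exact ENNReal.ofReal_pos.2 (sub_pos.2 hab)
    _ ≤ G.measure univ := measure_mono (subset_univ _)
end

section
/- Let μ be a probability measure on ℝ with density f bounded by a constant M, let F be its distribution function, and let X, Y be independent random variables each with law μ. Set θ_h = P(Y < X ≤ Y + h) and W_h = 1_{Y < X ≤ Y + h} − (F(X) − F(X−h)) − (F(Y+h) − F(Y)) + θ_h. Then there is a constant C, depending only on M, such that Var(W_h) ≤ C·h for all h ∈ (0,1]. -/
open MeasureTheory ProbabilityTheory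

lemma density_set_bound {f : ℝ → ℝ} {M : ℝ} (hf_bdd : ∀ x, f x ≤ M)
    {s : Set ℝ} (hs : MeasurableSet s) :
    (volume.withDensity fun x => ENNReal.ofReal (f x)) s ≤ ENNReal.ofReal M * volume s := by
  rw [withDensity_apply _ hs]
  calc ∫⁻ x in s, ENNReal.ofReal (f x) ≤ ∫⁻ _ in s, ENNReal.ofReal M :=
        lintegral_mono fun x => ENNReal.ofReal_le_ofReal (hf_bdd x)
    _ = ENNReal.ofReal M * volume s := by rw [setLIntegral_const]

/-- Variance bound for the fully degenerate term of the Hoeffding decomposition of the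
kernel `1_{y < x ≤ y+h}`: `Var(W_h) ≤ C·h` for `h ∈ (0,1]`, with `C` depending only on
the bound `M` of the density. -/
theorem stmt9 {Ω : Type*} [MeasurableSpace Ω] (P : Measure Ω) [IsProbabilityMeasure P]
    (X Y : Ω → ℝ) (hX : Measurable X) (hY : Measurable Y)
    (hindep : IndepFun X Y P)
    (μ : Measure ℝ) (hXlaw : P.map X = μ) (hYlaw : P.map Y = μ)
    (f : ℝ → ℝ) (M : ℝ) (hf_nonneg : ∀ x, 0 ≤ f x) (hf_bdd : ∀ x, f x ≤ M)
    (hμ : μ = volume.withDensity fun x => ENNReal.ofReal (f x)) :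
    ∃ C : ℝ, ∀ h ∈ Set.Ioc (0:ℝ) 1,
      variance
        (fun ω =>
          (if Y ω < X ω ∧ X ω ≤ Y ω + h then (1:ℝ) else 0)
            - ((μ (Set.Iic (X ω))).toReal - (μ (Set.Iic (X ω - h))).toReal)
            - ((μ (Set.Iic (Y ω + h))).toReal - (μ (Set.Iic (Y ω))).toReal)
            + (P {ω | Y ω < X ω ∧ X ω ≤ Y ω + h}).toReal)
        P ≤ C * h := by
  have hM : 0 ≤ M := le_trans (hf_nonneg 0) (hf_bdd 0)
  have hμprob : IsProbabilityMeasure μ := hXlaw ▸ Measure.isProbabilityMeasure_map hX.aemeasurable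
  -- measure of an interval of length ≤ h is ≤ M*h (in ℝ)
  have hIocR : ∀ a b : ℝ, (μ (Set.Ioc a b)).toReal ≤ M * (b - a) ∨ b < a := by
    intro a b
    rcases le_or_gt a b with hab | hab
    · left
      have h1 : μ (Set.Ioc a b) ≤ ENNReal.ofReal (M * (b - a)) := by
        rw [hμ]
        calc (volume.withDensity fun x => ENNReal.ofReal (f x)) (Set.Ioc a b)
            ≤ ENNReal.ofReal M * volume (Set.Ioc a b) := density_set_bound hf_bdd measurableSet_Ioc
          _ = ENNReal.ofReal (M * (b - a)) := by
              rw [Real.volume_Ioc, ← ENNReal.ofReal_mul hM]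
      calc (μ (Set.Ioc a b)).toReal ≤ (ENNReal.ofReal (M * (b - a))).toReal :=
            ENNReal.toReal_mono ENNReal.ofReal_ne_top h1
        _ = M * (b - a) := ENNReal.toReal_ofReal (mul_nonneg hM (sub_nonneg.2 hab))
    · right; exact hab
  -- F b - F a = μ(Ioc a b).toReal for a ≤ b
  have hF : ∀ a b : ℝ, a ≤ b →
      (μ (Set.Iic b)).toReal - (μ (Set.Iic a)).toReal = (μ (Set.Ioc a b)).toReal := by
    intro a b hab
    have hsplit : μ (Set.Iic b) = μ (Set.Iic a) + μ (Set.Ioc a b) := by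
      rw [← measure_union (by
            intro s hs1 hs2 x hx
            exact absurd ((hs2 hx).1) (not_lt.2 (hs1 hx))) measurableSet_Ioc]
      rw [Set.Iic_union_Ioc_eq_Iic hab]
    rw [hsplit, ENNReal.toReal_add (measure_ne_top μ _) (measure_ne_top μ _)]
    ring
  refine ⟨M + 8 * M ^ 2, ?_⟩
  rintro h ⟨hh0, hh1⟩
  set A : Set Ω := {ω | Y ω < X ω ∧ X ω ≤ Y ω + h} with hA
  have hAmeas : MeasurableSet A := (measurableSet_lt hY hX).inter
      (measurableSet_le hX (hY.add_const h))
  set θ : ℝ := (P A).toReal with hθdef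
  -- θ ≤ M * h via independence
  have hθMh : θ ≤ M * h := by
    have hmap : P.map (fun ω => (X ω, Y ω)) = μ.prod μ := by
      have := (indepFun_iff_map_prod_eq_prod_map_map hX.aemeasurable hY.aemeasurable).mp hindep
      rwa [hXlaw, hYlaw] at this
    have hSmeas : MeasurableSet {p : ℝ × ℝ | p.2 < p.1 ∧ p.1 ≤ p.2 + h} :=
      (measurableSet_lt measurable_snd measurable_fst).inter
        (measurableSet_le measurable_fst (measurable_snd.add_const h))
    have hPA : P A = (μ.prod μ) {p : ℝ × ℝ | p.2 < p.1 ∧ p.1 ≤ p.2 + h} := by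
      rw [← hmap, Measure.map_apply (hX.prodMk hY) hSmeas]
      rfl
    have hbound : (μ.prod μ) {p : ℝ × ℝ | p.2 < p.1 ∧ p.1 ≤ p.2 + h}
        ≤ ENNReal.ofReal (M * h) := by
      rw [Measure.prod_apply hSmeas]
      have hslice : ∀ x : ℝ, μ (Prod.mk x ⁻¹' {p : ℝ × ℝ | p.2 < p.1 ∧ p.1 ≤ p.2 + h})
          ≤ ENNReal.ofReal (M * h) := by
        intro x
        have : Prod.mk x ⁻¹' {p : ℝ × ℝ | p.2 < p.1 ∧ p.1 ≤ p.2 + h} = Set.Ico (x - h) x := by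
          ext y
          simp only [Set.mem_preimage, Set.mem_setOf_eq, Set.mem_Ico]
          constructor
          · rintro ⟨h1, h2⟩; exact ⟨by linarith, h1⟩
          · rintro ⟨h1, h2⟩; exact ⟨h2, by linarith⟩
        rw [this, hμ]
        calc (volume.withDensity fun x => ENNReal.ofReal (f x)) (Set.Ico (x - h) x)
            ≤ ENNReal.ofReal M * volume (Set.Ico (x - h) x) :=
              density_set_bound hf_bdd measurableSet_Ico
          _ = ENNReal.ofReal (M * h) := by
              rw [Real.volume_Ico, ← ENNReal.ofReal_mul hM]
              ring_nf
      calc ∫⁻ x, μ (Prod.mk x ⁻¹' {p : ℝ × ℝ | p.2 < p.1 ∧ p.1 ≤ p.2 + h}) ∂μ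
          ≤ ∫⁻ _, ENNReal.ofReal (M * h) ∂μ := lintegral_mono hslice
        _ = ENNReal.ofReal (M * h) := by simp
    calc θ ≤ (ENNReal.ofReal (M * h)).toReal := by
          rw [hθdef, hPA]
          exact ENNReal.toReal_mono ENNReal.ofReal_ne_top hbound
      _ = M * h := ENNReal.toReal_ofReal (mul_nonneg hM hh0.le)
  have hθ0 : 0 ≤ θ := ENNReal.toReal_nonneg
  set W : Ω → ℝ := fun ω =>
      (if Y ω < X ω ∧ X ω ≤ Y ω + h then (1:ℝ) else 0)
        - ((μ (Set.Iic (X ω))).toReal - (μ (Set.Iic (X ω - h))).toReal)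
        - ((μ (Set.Iic (Y ω + h))).toReal - (μ (Set.Iic (Y ω))).toReal)
        + (P {ω | Y ω < X ω ∧ X ω ≤ Y ω + h}).toReal with hWdef
  -- measurability of W
  have hFmeas : Measurable fun x : ℝ => (μ (Set.Iic x)).toReal := by
    have : Monotone fun x : ℝ => (μ (Set.Iic x)).toReal := fun a b hab =>
      ENNReal.toReal_mono (measure_ne_top μ _) (measure_mono (Set.Iic_subset_Iic.2 hab))
    exact this.measurable
  have hWmeas : Measurable W := by
    apply Measurable.add
    apply Measurable.sub
    apply Measurable.sub
    · exact Measurable.ite hAmeas measurable_const measurable_const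
    · exact (hFmeas.comp hX).sub (hFmeas.comp (hX.sub_const h))
    · exact (hFmeas.comp (hY.add_const h)).sub (hFmeas.comp hY)
    · exact measurable_const
  -- pointwise bounds on intermediate terms
  have hFterm : ∀ x : ℝ, 0 ≤ (μ (Set.Iic x)).toReal - (μ (Set.Iic (x - h))).toReal ∧
      (μ (Set.Iic x)).toReal - (μ (Set.Iic (x - h))).toReal ≤ M * h := by
    intro x
    have hle : x - h ≤ x := by linarith
    rw [hF _ _ hle]
    refine ⟨ENNReal.toReal_nonneg, ?_⟩
    rcases hIocR (x - h) x with hB | hB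
    · calc (μ (Set.Ioc (x-h) x)).toReal ≤ M * (x - (x - h)) := hB
        _ = M * h := by ring
    · linarith
  have hFterm' : ∀ y : ℝ, 0 ≤ (μ (Set.Iic (y+h))).toReal - (μ (Set.Iic y)).toReal ∧
      (μ (Set.Iic (y+h))).toReal - (μ (Set.Iic y)).toReal ≤ M * h := by
    intro y
    have hle : y ≤ y + h := by linarith
    rw [hF _ _ hle]
    refine ⟨ENNReal.toReal_nonneg, ?_⟩
    rcases hIocR y (y+h) with hB | hB
    · calc (μ (Set.Ioc y (y+h))).toReal ≤ M * (y + h - y) := hB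
        _ = M * h := by ring
    · linarith
  -- pointwise: W ω ^ 2 ≤ bound ω
  set B : Ω → ℝ := fun ω => (1 + 4*M*h) * A.indicator (fun _ => (1:ℝ)) ω + 4*M^2*h^2 with hBdef
  have hW2B : ∀ ω, W ω ^ 2 ≤ B ω := by
    intro ω
    have h1 := hFterm (X ω)
    have h2 := hFterm' (Y ω)
    by_cases hωA : ω ∈ A
    · have hind : (if Y ω < X ω ∧ X ω ≤ Y ω + h then (1:ℝ) else 0) = 1 := if_pos hωA
      have habs : |W ω| ≤ 1 + 2*M*h := by
        rw [hWdef]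
        simp only
        rw [hind]
        rw [abs_le]
        constructor <;> nlinarith [h1.1, h1.2, h2.1, h2.2, hθ0, hθMh]
      calc W ω ^ 2 = |W ω| ^ 2 := (sq_abs _).symm
        _ ≤ (1 + 2*M*h)^2 := pow_le_pow_left₀ (abs_nonneg _) habs 2
        _ ≤ B ω := by
            rw [hBdef]; simp only [Set.indicator_of_mem hωA]; nlinarith
    · have hind : (if Y ω < X ω ∧ X ω ≤ Y ω + h then (1:ℝ) else 0) = 0 := if_neg hωA
      have habs : |W ω| ≤ 2*M*h := by
        rw [hWdef]
        simp only
        rw [hind]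
        rw [abs_le]
        constructor <;> nlinarith [h1.1, h1.2, h2.1, h2.2, hθ0, hθMh]
      calc W ω ^ 2 = |W ω| ^ 2 := (sq_abs _).symm
        _ ≤ (2*M*h)^2 := pow_le_pow_left₀ (abs_nonneg _) habs 2
        _ ≤ B ω := by
            rw [hBdef]; simp only [Set.indicator_of_notMem hωA]; nlinarith
  -- integrability
  have hBint : Integrable B P := by
    apply Integrable.add
    · exact (((integrable_const (1:ℝ)).indicator hAmeas).const_mul _)
    · exact integrable_const _
  have hW2int : Integrable (fun ω => W ω ^ 2) P := by
    apply hBint.mono' ((hWmeas.pow_const 2).aestronglyMeasurable)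
    filter_upwards with ω
    rw [Real.norm_eq_abs, abs_of_nonneg (sq_nonneg _)]
    exact hW2B ω
  have hBint_val : ∫ ω, B ω ∂P = (1 + 4*M*h) * θ + 4*M^2*h^2 := by
    rw [hBdef]
    rw [integral_add ((((integrable_const (1:ℝ)).indicator hAmeas).const_mul _)) (integrable_const _)]
    rw [integral_const_mul, integral_indicator hAmeas]
    simp [hθdef, measureReal_def]
  have key : variance W P ≤ (1 + 4*M*h) * θ + 4*M^2*h^2 := by
    calc variance W P ≤ P[W ^ 2] := variance_le_expectation_sq hWmeas.aestronglyMeasurable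
      _ = ∫ ω, W ω ^ 2 ∂P := rfl
      _ ≤ ∫ ω, B ω ∂P := integral_mono hW2int hBint hW2B
      _ = (1 + 4*M*h) * θ + 4*M^2*h^2 := hBint_val
  calc variance W P ≤ (1 + 4*M*h) * θ + 4*M^2*h^2 := key
    _ ≤ (M + 8*M^2) * h := by
        have h1 : (1 + 4*M*h) * θ ≤ (1 + 4*M*h) * (M*h) :=
          mul_le_mul_of_nonneg_left hθMh (by positivity)
        have h2 : h * h ≤ h * 1 := mul_le_mul_of_nonneg_left hh1 hh0.le
        nlinarith [mul_nonneg (mul_nonneg hM hM) (mul_nonneg hh0.le hh0.le)]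
end

section
/- Let (ε_i)_{i≥1} be i.i.d. real random variables with common law μ, let τ ∈ (0,1), let v_n → 0 be positive reals and C > 0, and for each n let g_n : ℝ² → ℝ be measurable with ∫ g_n(x,y) dμ(y) = 0 for μ-a.e. x, ∫ g_n(x,y) dμ(x) = 0 for μ-a.e. y, and E[g_n(ε_1,ε_2)²] ≤ C·v_n. Then, with T_n = ⌊nτ⌋, max_{1 ≤ l ≤ T_n} n^{−3/2} | Σ_{i=1}^{l} Σ_{j=T_n+1}^{n} g_n(ε_i, ε_j) | → 0 in probability as n → ∞. -/
open MeasureTheory ProbabilityTheory Finset Filter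
open scoped ENNReal NNReal

lemma aux_int_mul {Ω : Type*} [MeasurableSpace Ω] {P : Measure Ω} {f h : Ω → ℝ}
    (hf : AEStronglyMeasurable f P) (hh : AEStronglyMeasurable h P)
    (hf2 : Integrable (fun ω => f ω ^ 2) P) (hh2 : Integrable (fun ω => h ω ^ 2) P) :
    Integrable (fun ω => f ω * h ω) P := by
  refine ((hf2.add hh2).div_const 2).mono' (hf.mul hh) ?_
  filter_upwards with ω
  simp only [Pi.add_apply]
  rw [Real.norm_eq_abs, abs_mul]
  nlinarith [sq_nonneg (|f ω| - |h ω|), sq_abs (f ω), sq_abs (h ω),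
    abs_nonneg (f ω), abs_nonneg (h ω)]

lemma aux_zero_pair (μ : Measure ℝ) [IsProbabilityMeasure μ] (g : ℝ → ℝ → ℝ)
    (hg : Measurable fun p : ℝ × ℝ => g p.1 p.2)
    (hgi : Integrable (fun p : ℝ × ℝ => (g p.1 p.2) ^ 2) (μ.prod μ))
    (hdeg : ∀ᵐ x ∂μ, ∫ y, g x y ∂μ = 0) :
    ∫ p : ℝ × ℝ, g p.1 p.2 ∂(μ.prod μ) = 0 := by
  have hint : Integrable (fun p : ℝ × ℝ => g p.1 p.2) (μ.prod μ) :=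
    ((memLp_two_iff_integrable_sq hg.aestronglyMeasurable).mpr hgi).integrable one_le_two
  rw [integral_prod _ hint]
  rw [integral_congr_ae hdeg, integral_zero]

lemma aux_zero1 (μ : Measure ℝ) [IsProbabilityMeasure μ] (g : ℝ → ℝ → ℝ)
    (hg : Measurable fun p : ℝ × ℝ => g p.1 p.2)
    (hgi : Integrable (fun p : ℝ × ℝ => (g p.1 p.2) ^ 2) (μ.prod μ))
    (hdeg : ∀ᵐ x ∂μ, ∫ y, g x y ∂μ = 0) :
    ∫ p : ℝ × ℝ × ℝ, g p.1 p.2.1 * g p.1 p.2.2 ∂(μ.prod (μ.prod μ)) = 0 := by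
  have hmpf : MeasurePreserving (Prod.fst : ℝ × ℝ → ℝ) (μ.prod μ) μ :=
    ⟨measurable_fst, by simp [Measure.map_fst_prod]⟩
  have hmps : MeasurePreserving (Prod.snd : ℝ × ℝ → ℝ) (μ.prod μ) μ :=
    ⟨measurable_snd, by simp [Measure.map_snd_prod]⟩
  have hmp1 : MeasurePreserving (fun p : ℝ × ℝ × ℝ => (p.1, p.2.1))
      (μ.prod (μ.prod μ)) (μ.prod μ) := (MeasurePreserving.id μ).prod hmpf
  have hmp2 : MeasurePreserving (fun p : ℝ × ℝ × ℝ => (p.1, p.2.2))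
      (μ.prod (μ.prod μ)) (μ.prod μ) := (MeasurePreserving.id μ).prod hmps
  have hme : Measurable fun p : ℝ × ℝ × ℝ => g p.1 p.2.1 * g p.1 p.2.2 := by
    apply Measurable.mul
    · exact hg.comp (measurable_fst.prodMk (measurable_fst.comp measurable_snd))
    · exact hg.comp (measurable_fst.prodMk (measurable_snd.comp measurable_snd))
  have hb1 : Integrable (fun p : ℝ × ℝ × ℝ => (g p.1 p.2.1) ^ 2) (μ.prod (μ.prod μ)) :=
    (hmp1.integrable_comp hgi.aestronglyMeasurable).mpr hgi
  have hb2 : Integrable (fun p : ℝ × ℝ × ℝ => (g p.1 p.2.2) ^ 2) (μ.prod (μ.prod μ)) :=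
    (hmp2.integrable_comp hgi.aestronglyMeasurable).mpr hgi
  have hGi : Integrable (fun p : ℝ × ℝ × ℝ => g p.1 p.2.1 * g p.1 p.2.2)
      (μ.prod (μ.prod μ)) := by
    refine ((hb1.add hb2).div_const 2).mono' hme.aestronglyMeasurable ?_
    filter_upwards with p
    simp only [Pi.add_apply]
    rw [Real.norm_eq_abs, abs_mul]
    nlinarith [sq_nonneg (|g p.1 p.2.1| - |g p.1 p.2.2|), sq_abs (g p.1 p.2.1),
      sq_abs (g p.1 p.2.2), abs_nonneg (g p.1 p.2.1), abs_nonneg (g p.1 p.2.2)]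
  rw [integral_prod _ hGi]
  have h0 : ∀ᵐ x ∂μ, (∫ q : ℝ × ℝ, g x q.1 * g x q.2 ∂(μ.prod μ)) = 0 := by
    filter_upwards [hdeg] with x hx
    rw [integral_prod_mul (fun y => g x y) (fun y => g x y), hx, mul_zero]
  rw [integral_congr_ae h0, integral_zero]

/-- For i.i.d. `ε_i` and a sequence of completely degenerate kernels `g_n` with
`E[g_n(ε_1,ε_2)²] ≤ C·v_n → 0`, the maximum over `1 ≤ l ≤ ⌊nτ⌋` of
`n^{−3/2} |Σ_{i=1}^l Σ_{j=⌊nτ⌋+1}^n g_n(ε_i,ε_j)|` tends to `0` in probability. -/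
theorem stmt11 {Ω : Type*} [MeasurableSpace Ω] (P : Measure Ω) [IsProbabilityMeasure P]
    (ε : ℕ → Ω → ℝ) (hεm : ∀ i, Measurable (ε i))
    (hindep : iIndepFun ε P)
    (μ : Measure ℝ) (hlaw : ∀ i, P.map (ε i) = μ)
    (τ : ℝ) (hτ : τ ∈ Set.Ioo (0:ℝ) 1)
    (v : ℕ → ℝ) (hv_pos : ∀ n, 0 < v n) (hv : Tendsto v atTop (nhds 0))
    (C : ℝ) (hC : 0 < C)
    (g : ℕ → ℝ → ℝ → ℝ) (hg : ∀ n, Measurable fun p : ℝ × ℝ => g n p.1 p.2)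
    (hL2 : ∀ n, Integrable (fun ω => (g n (ε 1 ω) (ε 2 ω)) ^ 2) P)
    (hdeg1 : ∀ n, ∀ᵐ x ∂μ, ∫ y, g n x y ∂μ = 0)
    (hdeg2 : ∀ n, ∀ᵐ y ∂μ, ∫ x, g n x y ∂μ = 0)
    (hbound : ∀ n, ∫ ω, (g n (ε 1 ω) (ε 2 ω)) ^ 2 ∂P ≤ C * v n) :
    ∀ s : ℝ, 0 < s →
      Tendsto
        (fun n : ℕ =>
          P {ω | ∃ l, 1 ≤ l ∧ l ≤ ⌊(n : ℝ) * τ⌋₊ ∧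
            s ≤ (n : ℝ) ^ (-(3:ℝ)/2) *
              |∑ i ∈ Finset.Icc 1 l, ∑ j ∈ Finset.Icc (⌊(n : ℝ) * τ⌋₊ + 1) n,
                g n (ε i ω) (ε j ω)|})
        atTop (nhds 0) := by
  intro s hs
  have hμprob : IsProbabilityMeasure μ := by
    rw [← hlaw 0]; exact Measure.isProbabilityMeasure_map (hεm 0).aemeasurable
  -- joint laws
  have pairlaw : ∀ i j : ℕ, i ≠ j →
      P.map (fun ω => (ε i ω, ε j ω)) = μ.prod μ := by
    intro i j hij
    rw [(indepFun_iff_map_prod_eq_prod_map_map (hεm i).aemeasurable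
      (hεm j).aemeasurable).mp (hindep.indepFun hij), hlaw, hlaw]
  have triplelaw : ∀ i j k : ℕ, i ≠ j → i ≠ k → j ≠ k →
      P.map (fun ω => (ε i ω, (ε j ω, ε k ω))) = μ.prod (μ.prod μ) := by
    intro i j k hij hik hjk
    have h : IndepFun (ε i) (fun ω => (ε j ω, ε k ω)) P :=
      (hindep.indepFun_prodMk hεm j k i hij.symm hik.symm).symm
    rw [(indepFun_iff_map_prod_eq_prod_map_map (hεm i).aemeasurable
      ((hεm j).prodMk (hεm k)).aemeasurable).mp h, hlaw, pairlaw j k hjk]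
  have quadlaw : ∀ i j k l : ℕ, i ≠ j → k ≠ l → i ≠ k → i ≠ l → j ≠ k → j ≠ l →
      P.map (fun ω => ((ε i ω, ε j ω), (ε k ω, ε l ω))) = (μ.prod μ).prod (μ.prod μ) := by
    intro i j k l hij hkl hik hil hjk hjl
    rw [(indepFun_iff_map_prod_eq_prod_map_map ((hεm i).prodMk (hεm j)).aemeasurable
      ((hεm k).prodMk (hεm l)).aemeasurable).mp
      (hindep.indepFun_prodMk_prodMk hεm i j k l hik hil hjk hjl),
      pairlaw i j hij, pairlaw k l hkl]
  -- transferred second moment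
  have hsq : ∀ n, Integrable (fun q : ℝ × ℝ => (g n q.1 q.2) ^ 2) (μ.prod μ) := by
    intro n
    rw [← pairlaw 1 2 (by norm_num : (1:ℕ) ≠ 2)]
    exact (integrable_map_measure ((hg n).pow_const 2).aestronglyMeasurable
      ((hεm 1).prodMk (hεm 2)).aemeasurable).mpr (hL2 n)
  have hm_nonneg : ∀ n, 0 ≤ ∫ q : ℝ × ℝ, (g n q.1 q.2) ^ 2 ∂(μ.prod μ) :=
    fun n => integral_nonneg fun q => sq_nonneg _
  have hm_le : ∀ n, ∫ q : ℝ × ℝ, (g n q.1 q.2) ^ 2 ∂(μ.prod μ) ≤ C * v n := by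
    intro n
    have h : ∫ q : ℝ × ℝ, (g n q.1 q.2) ^ 2 ∂(μ.prod μ)
        = ∫ ω, (g n (ε 1 ω) (ε 2 ω)) ^ 2 ∂P := by
      rw [← pairlaw 1 2 (by norm_num : (1:ℕ) ≠ 2),
        integral_map ((hεm 1).prodMk (hεm 2)).aemeasurable
          ((hg n).pow_const 2).aestronglyMeasurable]
    rw [h]; exact hbound n
  -- key second-moment bound
  have keyE : ∀ n : ℕ, ∀ l : ℕ, l ≤ ⌊(n : ℝ) * τ⌋₊ →
      Integrable (fun ω => (∑ i ∈ Finset.Icc 1 l, ∑ j ∈ Finset.Icc (⌊(n : ℝ) * τ⌋₊ + 1) n,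
          g n (ε i ω) (ε j ω)) ^ 2) P ∧
      ∫ ω, (∑ i ∈ Finset.Icc 1 l, ∑ j ∈ Finset.Icc (⌊(n : ℝ) * τ⌋₊ + 1) n,
          g n (ε i ω) (ε j ω)) ^ 2 ∂P ≤ (n : ℝ) ^ 2 * (C * v n) := by
    intro n l hl
    have hTn : ⌊(n : ℝ) * τ⌋₊ ≤ n := by
      calc ⌊(n : ℝ) * τ⌋₊ ≤ ⌊(n : ℝ)⌋₊ :=
            Nat.floor_le_floor (mul_le_of_le_one_right (Nat.cast_nonneg n) hτ.2.le)
        _ = n := Nat.floor_natCast n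
    set T := ⌊(n : ℝ) * τ⌋₊ with hT
    set A : Finset (ℕ × ℕ) := Finset.Icc 1 l ×ˢ Finset.Icc (T + 1) n with hA
    set X : ℕ × ℕ → Ω → ℝ := fun p ω => g n (ε p.1 ω) (ε p.2 ω) with hX
    have hmem : ∀ p ∈ A, p.1 ≤ T ∧ T + 1 ≤ p.2 ∧ p.2 ≤ n := by
      intro p hp
      rw [hA, Finset.mem_product, Finset.mem_Icc, Finset.mem_Icc] at hp
      exact ⟨hp.1.2.trans hl, hp.2.1, hp.2.2⟩
    have hXmeas : ∀ p : ℕ × ℕ, Measurable (X p) :=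
      fun p => (hg n).comp ((hεm p.1).prodMk (hεm p.2))
    have hXsqint : ∀ p ∈ A, Integrable (fun ω => X p ω ^ 2) P := by
      intro p hp
      obtain ⟨h1, h2, _⟩ := hmem p hp
      have hne : p.1 ≠ p.2 := by omega
      have h := (integrable_map_measure (μ := P) (f := fun ω => (ε p.1 ω, ε p.2 ω))
        ((hg n).pow_const 2).aestronglyMeasurable
        ((hεm p.1).prodMk (hεm p.2)).aemeasurable).mp
      rw [pairlaw p.1 p.2 hne] at h
      exact h (hsq n)
    have hXsqval : ∀ p ∈ A, ∫ ω, X p ω ^ 2 ∂P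
        = ∫ q : ℝ × ℝ, (g n q.1 q.2) ^ 2 ∂(μ.prod μ) := by
      intro p hp
      obtain ⟨h1, h2, _⟩ := hmem p hp
      have hne : p.1 ≠ p.2 := by omega
      have h := integral_map (μ := P) (φ := fun ω => (ε p.1 ω, ε p.2 ω))
        ((hεm p.1).prodMk (hεm p.2)).aemeasurable
        ((hg n).pow_const 2).aestronglyMeasurable
      rw [pairlaw p.1 p.2 hne] at h
      exact h.symm
    have hmul : ∀ p ∈ A, ∀ q ∈ A, Integrable (fun ω => X p ω * X q ω) P :=
      fun p hp q hq => aux_int_mul (hXmeas p).aestronglyMeasurable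
        (hXmeas q).aestronglyMeasurable (hXsqint p hp) (hXsqint q hq)
    have hcross : ∀ p ∈ A, ∀ q ∈ A, p ≠ q → ∫ ω, X p ω * X q ω ∂P = 0 := by
      intro p hp q hq hpq
      obtain ⟨hp1, hp2, hp3⟩ := hmem p hp
      obtain ⟨hq1, hq2, hq3⟩ := hmem q hq
      by_cases h1 : p.1 = q.1
      · have h2 : p.2 ≠ q.2 := fun h => hpq (Prod.ext h1 h)
        have hφ : Measurable (fun ω => (ε p.1 ω, (ε p.2 ω, ε q.2 ω))) :=
          (hεm p.1).prodMk ((hεm p.2).prodMk (hεm q.2))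
        have hGm : Measurable (fun r : ℝ × ℝ × ℝ => g n r.1 r.2.1 * g n r.1 r.2.2) := by
          apply Measurable.mul
          · exact (hg n).comp (measurable_fst.prodMk (measurable_fst.comp measurable_snd))
          · exact (hg n).comp (measurable_fst.prodMk (measurable_snd.comp measurable_snd))
        have hmap := integral_map (μ := P) hφ.aemeasurable
          (f := fun r : ℝ × ℝ × ℝ => g n r.1 r.2.1 * g n r.1 r.2.2) hGm.aestronglyMeasurable
        rw [triplelaw p.1 p.2 q.2 (by omega) (by omega) h2] at hmap
        have hrw : (fun ω => X p ω * X q ω)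
            = fun ω => (fun r : ℝ × ℝ × ℝ => g n r.1 r.2.1 * g n r.1 r.2.2)
                (ε p.1 ω, (ε p.2 ω, ε q.2 ω)) := by
          funext ω; simp only [hX, ← h1]
        rw [hrw, ← hmap]
        exact aux_zero1 μ (g n) (hg n) (hsq n) (hdeg1 n)
      · by_cases h2 : p.2 = q.2
        · have hφ : Measurable (fun ω => (ε p.2 ω, (ε p.1 ω, ε q.1 ω))) :=
            (hεm p.2).prodMk ((hεm p.1).prodMk (hεm q.1))
          have hGm : Measurable (fun r : ℝ × ℝ × ℝ => g n r.2.1 r.1 * g n r.2.2 r.1) := by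
            apply Measurable.mul
            · exact (hg n).comp ((measurable_fst.comp measurable_snd).prodMk measurable_fst)
            · exact (hg n).comp ((measurable_snd.comp measurable_snd).prodMk measurable_fst)
          have hmap := integral_map (μ := P) hφ.aemeasurable
            (f := fun r : ℝ × ℝ × ℝ => g n r.2.1 r.1 * g n r.2.2 r.1) hGm.aestronglyMeasurable
          rw [triplelaw p.2 p.1 q.1 (by omega) (by omega) h1] at hmap
          have hrw : (fun ω => X p ω * X q ω)
              = fun ω => (fun r : ℝ × ℝ × ℝ => g n r.2.1 r.1 * g n r.2.2 r.1)
                  (ε p.2 ω, (ε p.1 ω, ε q.1 ω)) := by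
            funext ω; simp only [hX, ← h2]
          rw [hrw, ← hmap]
          have hswap : MeasurePreserving (Prod.swap : ℝ × ℝ → ℝ × ℝ) (μ.prod μ) (μ.prod μ) :=
            Measure.measurePreserving_swap
          have hsq' : Integrable (fun q : ℝ × ℝ => (g n q.2 q.1) ^ 2) (μ.prod μ) :=
            (hswap.integrable_comp (hsq n).aestronglyMeasurable).mpr (hsq n)
          exact aux_zero1 μ (fun y x => g n x y)
            ((hg n).comp (measurable_snd.prodMk measurable_fst)) hsq' (hdeg2 n)
        · -- all four distinct
          have hφ : Measurable (fun ω => ((ε p.1 ω, ε p.2 ω), (ε q.1 ω, ε q.2 ω))) :=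
            ((hεm p.1).prodMk (hεm p.2)).prodMk ((hεm q.1).prodMk (hεm q.2))
          have hGm : Measurable (fun r : (ℝ × ℝ) × ℝ × ℝ => g n r.1.1 r.1.2 * g n r.2.1 r.2.2) := by
            apply Measurable.mul
            · exact (hg n).comp ((measurable_fst.comp measurable_fst).prodMk
                (measurable_snd.comp measurable_fst))
            · exact (hg n).comp ((measurable_fst.comp measurable_snd).prodMk
                (measurable_snd.comp measurable_snd))
          have hmap := integral_map (μ := P) hφ.aemeasurable
            (f := fun r : (ℝ × ℝ) × ℝ × ℝ => g n r.1.1 r.1.2 * g n r.2.1 r.2.2)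
            hGm.aestronglyMeasurable
          rw [quadlaw p.1 p.2 q.1 q.2 (by omega) (by omega) h1 (by omega) (by omega) h2] at hmap
          have hrw : (fun ω => X p ω * X q ω)
              = fun ω => (fun r : (ℝ × ℝ) × ℝ × ℝ => g n r.1.1 r.1.2 * g n r.2.1 r.2.2)
                  ((ε p.1 ω, ε p.2 ω), (ε q.1 ω, ε q.2 ω)) := by
            funext ω; simp only [hX]
          rw [hrw, ← hmap]
          rw [integral_prod_mul (μ := μ.prod μ) (ν := μ.prod μ)
            (fun q : ℝ × ℝ => g n q.1 q.2) (fun q : ℝ × ℝ => g n q.1 q.2),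
            aux_zero_pair μ (g n) (hg n) (hsq n) (hdeg1 n), mul_zero]
    -- expand the square
    have hSrw : ∀ ω : Ω, (∑ i ∈ Finset.Icc 1 l, ∑ j ∈ Finset.Icc (T + 1) n, g n (ε i ω) (ε j ω))
        = ∑ p ∈ A, X p ω := by
      intro ω; rw [hA, Finset.sum_product]
    have hfun : (fun ω => (∑ i ∈ Finset.Icc 1 l, ∑ j ∈ Finset.Icc (T + 1) n,
        g n (ε i ω) (ε j ω)) ^ 2) = fun ω => ∑ p ∈ A, ∑ q ∈ A, X p ω * X q ω := by
      funext ω; rw [hSrw ω, sq, Finset.sum_mul_sum]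
    have hint : Integrable (fun ω => (∑ i ∈ Finset.Icc 1 l, ∑ j ∈ Finset.Icc (T + 1) n,
        g n (ε i ω) (ε j ω)) ^ 2) P := by
      rw [hfun]
      exact integrable_finset_sum _ fun p hp => integrable_finset_sum _ fun q hq => hmul p hp q hq
    refine ⟨hint, ?_⟩
    have hval : ∫ ω, (∑ i ∈ Finset.Icc 1 l, ∑ j ∈ Finset.Icc (T + 1) n,
        g n (ε i ω) (ε j ω)) ^ 2 ∂P
        = (A.card : ℝ) * ∫ q : ℝ × ℝ, (g n q.1 q.2) ^ 2 ∂(μ.prod μ) := by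
      rw [hfun]
      rw [integral_finset_sum _ fun p hp => integrable_finset_sum _ fun q hq => hmul p hp q hq]
      have : ∀ p ∈ A, ∫ ω, ∑ q ∈ A, X p ω * X q ω ∂P
          = ∫ q : ℝ × ℝ, (g n q.1 q.2) ^ 2 ∂(μ.prod μ) := by
        intro p hp
        rw [integral_finset_sum _ fun q hq => hmul p hp q hq,
          Finset.sum_eq_single_of_mem p hp fun q hq hqp => hcross p hp q hq (Ne.symm hqp)]
        rw [show (fun ω => X p ω * X p ω) = fun ω => X p ω ^ 2 from
          funext fun ω => (sq (X p ω)).symm]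
        exact hXsqval p hp
      rw [Finset.sum_congr rfl this, Finset.sum_const, nsmul_eq_mul]
    rw [hval]
    have hcard : (A.card : ℝ) ≤ (n : ℝ) ^ 2 := by
      have h1 : A.card = (Finset.Icc 1 l).card * (Finset.Icc (T + 1) n).card := by
        rw [hA]; exact Finset.card_product _ _
      have h2 : (Finset.Icc 1 l).card ≤ n := by rw [Nat.card_Icc]; omega
      have h3 : (Finset.Icc (T + 1) n).card ≤ n := by rw [Nat.card_Icc]; omega
      have h4 : A.card ≤ n * n := h1 ▸ Nat.mul_le_mul h2 h3
      calc (A.card : ℝ) ≤ ((n * n : ℕ) : ℝ) := Nat.cast_le.mpr h4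
        _ = (n : ℝ) ^ 2 := by push_cast; ring
    exact mul_le_mul hcard (hm_le n) (hm_nonneg n) (by positivity)
  -- main bound for n ≥ 1
  have hmain : ∀ n : ℕ, 1 ≤ n →
      P {ω | ∃ l, 1 ≤ l ∧ l ≤ ⌊(n : ℝ) * τ⌋₊ ∧
        s ≤ (n : ℝ) ^ (-(3:ℝ)/2) *
          |∑ i ∈ Finset.Icc 1 l, ∑ j ∈ Finset.Icc (⌊(n : ℝ) * τ⌋₊ + 1) n,
            g n (ε i ω) (ε j ω)|} ≤ ENNReal.ofReal (C * v n / s ^ 2) := by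
    intro n hn
    have hTn : ⌊(n : ℝ) * τ⌋₊ ≤ n := by
      calc ⌊(n : ℝ) * τ⌋₊ ≤ ⌊(n : ℝ)⌋₊ :=
            Nat.floor_le_floor (mul_le_of_le_one_right (Nat.cast_nonneg n) hτ.2.le)
        _ = n := Nat.floor_natCast n
    set T := ⌊(n : ℝ) * τ⌋₊ with hT
    set B : ℕ → Set Ω := fun l => {ω | s ≤ (n : ℝ) ^ (-(3:ℝ)/2) *
      |∑ i ∈ Finset.Icc 1 l, ∑ j ∈ Finset.Icc (T + 1) n, g n (ε i ω) (ε j ω)|} with hB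
    have hsubset : {ω | ∃ l, 1 ≤ l ∧ l ≤ T ∧
        s ≤ (n : ℝ) ^ (-(3:ℝ)/2) *
          |∑ i ∈ Finset.Icc 1 l, ∑ j ∈ Finset.Icc (T + 1) n, g n (ε i ω) (ε j ω)|}
        ⊆ ⋃ l ∈ Finset.Icc 1 T, B l := by
      rintro ω ⟨l, h1, h2, h3⟩
      exact Set.mem_iUnion₂.mpr ⟨l, Finset.mem_Icc.mpr ⟨h1, h2⟩, h3⟩
    have hnpos : (0:ℝ) < n := by exact_mod_cast hn
    have hBl : ∀ l ∈ Finset.Icc 1 T, P (B l) ≤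
        ENNReal.ofReal ((n : ℝ) ^ 2 * (C * v n)) / ENNReal.ofReal (s ^ 2 * (n : ℝ) ^ 3) := by
      intro l hl
      rw [Finset.mem_Icc] at hl
      obtain ⟨hint, hval⟩ := keyE n l hl.2
      set S : Ω → ℝ := fun ω => ∑ i ∈ Finset.Icc 1 l, ∑ j ∈ Finset.Icc (T + 1) n,
        g n (ε i ω) (ε j ω) with hS
      have hSmeas : Measurable S := by
        apply Finset.measurable_sum; intro i _
        apply Finset.measurable_sum; intro j _
        exact (hg n).comp ((hεm i).prodMk (hεm j))
      have hc : (0:ℝ) < (n : ℝ) ^ ((3:ℝ)/2) := Real.rpow_pos_of_pos hnpos _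
      have hc2 : ((n : ℝ) ^ ((3:ℝ)/2)) ^ 2 = (n : ℝ) ^ 3 := by
        rw [← Real.rpow_natCast ((n : ℝ) ^ ((3:ℝ)/2)) 2, ← Real.rpow_mul hnpos.le,
          ← Real.rpow_natCast (n : ℝ) 3]
        norm_num
      have hsub2 : B l ⊆ {ω | ENNReal.ofReal (s ^ 2 * (n : ℝ) ^ 3)
          ≤ ENNReal.ofReal (S ω ^ 2)} := by
        intro ω hω
        simp only [hB, Set.mem_setOf_eq] at hω ⊢
        have hrwn : (n : ℝ) ^ (-(3:ℝ)/2) = ((n : ℝ) ^ ((3:ℝ)/2))⁻¹ := by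
          rw [neg_div, Real.rpow_neg hnpos.le]
        rw [hrwn, inv_mul_eq_div, le_div_iff₀ hc] at hω
        apply ENNReal.ofReal_le_ofReal
        calc s ^ 2 * (n : ℝ) ^ 3 = (s * (n : ℝ) ^ ((3:ℝ)/2)) ^ 2 := by rw [mul_pow, hc2]
          _ ≤ |S ω| ^ 2 := pow_le_pow_left₀ (by positivity) hω 2
          _ = S ω ^ 2 := sq_abs _
      calc P (B l) ≤ P {ω | ENNReal.ofReal (s ^ 2 * (n : ℝ) ^ 3)
            ≤ ENNReal.ofReal (S ω ^ 2)} := measure_mono hsub2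
        _ ≤ (∫⁻ ω, ENNReal.ofReal (S ω ^ 2) ∂P) / ENNReal.ofReal (s ^ 2 * (n : ℝ) ^ 3) := by
            apply meas_ge_le_lintegral_div
            · exact ((hSmeas.pow_const 2).ennreal_ofReal).aemeasurable
            · simp only [ne_eq, ENNReal.ofReal_eq_zero, not_le]
              positivity
            · exact ENNReal.ofReal_ne_top
        _ = ENNReal.ofReal (∫ ω, S ω ^ 2 ∂P) / ENNReal.ofReal (s ^ 2 * (n : ℝ) ^ 3) := by
            rw [ofReal_integral_eq_lintegral_ofReal hint
              (Eventually.of_forall fun ω => sq_nonneg _)]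
        _ ≤ _ := by
            exact ENNReal.div_le_div_right (ENNReal.ofReal_le_ofReal hval) _
    have hcard : (Finset.Icc 1 T).card ≤ n := by rw [Nat.card_Icc]; omega
    calc P {ω | ∃ l, 1 ≤ l ∧ l ≤ T ∧
          s ≤ (n : ℝ) ^ (-(3:ℝ)/2) *
            |∑ i ∈ Finset.Icc 1 l, ∑ j ∈ Finset.Icc (T + 1) n, g n (ε i ω) (ε j ω)|}
        ≤ P (⋃ l ∈ Finset.Icc 1 T, B l) := measure_mono hsubset
      _ ≤ ∑ l ∈ Finset.Icc 1 T, P (B l) := measure_biUnion_finset_le _ _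
      _ ≤ ∑ _l ∈ Finset.Icc 1 T, (ENNReal.ofReal ((n : ℝ) ^ 2 * (C * v n))
            / ENNReal.ofReal (s ^ 2 * (n : ℝ) ^ 3)) := Finset.sum_le_sum hBl
      _ = ((Finset.Icc 1 T).card : ℝ≥0∞) * (ENNReal.ofReal ((n : ℝ) ^ 2 * (C * v n))
            / ENNReal.ofReal (s ^ 2 * (n : ℝ) ^ 3)) := by
          rw [Finset.sum_const, nsmul_eq_mul]
      _ ≤ (n : ℝ≥0∞) * (ENNReal.ofReal ((n : ℝ) ^ 2 * (C * v n))
            / ENNReal.ofReal (s ^ 2 * (n : ℝ) ^ 3)) := by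
          exact mul_le_mul_left (by exact_mod_cast hcard) _
      _ = ENNReal.ofReal (C * v n / s ^ 2) := by
          have hb : (0:ℝ) < s ^ 2 * (n : ℝ) ^ 3 := by positivity
          rw [← ENNReal.ofReal_natCast n, ← mul_div_assoc,
            ← ENNReal.ofReal_mul (by positivity : (0:ℝ) ≤ (n : ℝ)),
            ← ENNReal.ofReal_div_of_pos hb]
          congr 1
          have hn0 : (n : ℝ) ≠ 0 := ne_of_gt hnpos
          have hs0 : s ≠ 0 := ne_of_gt hs
          field_simp
  -- conclude
  have hlim : Tendsto (fun n => ENNReal.ofReal (C * v n / s ^ 2)) atTop (nhds 0) := by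
    have h1 : Tendsto (fun n => C * v n / s ^ 2) atTop (nhds 0) := by
      have h2 := (hv.const_mul C).div_const (s ^ 2)
      simpa using h2
    have := ENNReal.tendsto_ofReal h1
    simpa using this
  refine tendsto_of_tendsto_of_tendsto_of_le_of_le' tendsto_const_nhds hlim
    (Eventually.of_forall fun n => zero_le) ?_
  filter_upwards [eventually_ge_atTop 1] with n hn using hmain n hn
end
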